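/- arXiv:2311.17505 — 4 statements merged into one kernel-verified Lean document; each statement's English description precedes it below -/
import Mathlib

section
/- (Uniqueness of the planar log-Minkowski problem for smooth symmetric bodies) Let K and L be origin-symmetric convex bodies in ℝ² with C² boundaries of positive curvature. If the cone-volume measures of K and L coincide, V_K = V_L, then K = L. -/
open Real MeasureTheory intervalIntegral

/-- The radius of curvature `1/κ = h + h''` of the convex body with support
function `h` (as a `2π`-periodic function of the normal angle). -/
noncomputable def bodyRho (h : ℝ → ℝ) (θ : ℝ) : ℝ := h θ + deriv (deriv h) θ

/-- The curvature `κ(u)` of the boundary at the point with outer normal angle `θ`,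
so that `1/κ = h + h''`. -/
noncomputable def bodyCurv (h : ℝ → ℝ) (θ : ℝ) : ℝ := (bodyRho h θ)⁻¹

/-- `h` is the support function of a planar convex body with `C²` boundary of
positive curvature: `h` is `C²`, `2π`-periodic and `h + h'' > 0`. -/
def IsSmoothBody (h : ℝ → ℝ) : Prop :=
  ContDiff ℝ 2 h ∧ Function.Periodic h (2 * π) ∧ ∀ θ : ℝ, 0 < bodyRho h θ

/-- The body is origin-symmetric iff its support function is `π`-antipodally invariant. -/
def OriginSymmetric (h : ℝ → ℝ) : Prop := ∀ θ : ℝ, h (θ + π) = h θ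

/-- The area `V(K) = (1/2)∫_{S¹} h_K (h_K + h_K'') dθ`. -/
noncomputable def bodyArea (h : ℝ → ℝ) : ℝ :=
  (1 / 2) * ∫ θ in (0:ℝ)..(2 * π), h θ * bodyRho h θ

/-- The perimeter `S(K) = ∫_{S¹} h_K dθ`. -/
noncomputable def bodyPerim (h : ℝ → ℝ) : ℝ := ∫ θ in (0:ℝ)..(2 * π), h θ

/-- The mixed volume `V(K, L) = (1/2)∫_{S¹} h_L (h_K + h_K'') dθ`. -/
noncomputable def bodyMixedVol (hK hL : ℝ → ℝ) : ℝ :=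
  (1 / 2) * ∫ θ in (0:ℝ)..(2 * π), hL θ * bodyRho hK θ

/-- The integral `∫_{S¹} f dV_K` of `f` against the cone-volume measure
`dV_K = (1/2) h_K dS_K = (1/2) h_K (h_K + h_K'') dθ`. -/
noncomputable def coneIntegral (h f : ℝ → ℝ) : ℝ :=
  (1 / 2) * ∫ θ in (0:ℝ)..(2 * π), f θ * (h θ * bodyRho h θ)

/-- Two bodies are dilates iff their support functions are positive multiples
of each other. -/
def AreDilates (hK hL : ℝ → ℝ) : Prop := ∃ c : ℝ, 0 < c ∧ ∀ θ : ℝ, hK θ = c * hL θ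

/-- The cone-volume measure `V_K` of the body with support function `h`: the measure
on `S¹ = [0, 2π)` with density `(1/2) h_K/κ_K = (1/2) h_K (h_K + h_K'')` with respect
to the angle measure. -/
noncomputable def coneVolumeMeasure (h : ℝ → ℝ) : Measure ℝ :=
  (volume.restrict (Set.Ico (0:ℝ) (2 * π))).withDensity
    (fun θ => ENNReal.ofReal ((1 / 2) * (h θ * bodyRho h θ)))


section Stmt5Aux

variable {f h hK hL : ℝ → ℝ} {c : ℝ}

lemma myContDiff_deriv (hf : ContDiff ℝ 2 f) : ContDiff ℝ 1 (deriv f) := by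
  have h2 : ContDiff ℝ (1 + 1) f := by exact_mod_cast hf
  exact (contDiff_succ_iff_deriv.mp h2).2.2

lemma myDiff1 (hf : ContDiff ℝ 2 f) : Differentiable ℝ f := hf.differentiable (by norm_num)

lemma myDiff2 (hf : ContDiff ℝ 2 f) : Differentiable ℝ (deriv f) :=
  (myContDiff_deriv hf).differentiable one_ne_zero

lemma myCont2 (hf : ContDiff ℝ 2 f) : Continuous (deriv (deriv f)) :=
  (contDiff_one_iff_deriv.mp (myContDiff_deriv hf)).2

lemma myPeriodic_deriv (hp : Function.Periodic f c) : Function.Periodic (deriv f) c := by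
  intro x
  have h1 : (fun y => f (y + c)) = f := funext hp
  conv_lhs => rw [← deriv_comp_add_const]
  rw [h1]

lemma body_pos (hf : ContDiff ℝ 2 h) (hρ : ∀ θ, 0 < bodyRho h θ)
    (hs : Function.Periodic h π) : ∀ θ, 0 < h θ := by
  intro θ
  have d1 : Differentiable ℝ h := myDiff1 hf
  have d2 : Differentiable ℝ (deriv h) := myDiff2 hf
  set g : ℝ → ℝ := fun φ => (h φ * Real.cos φ - deriv h φ * Real.sin φ) * Real.cos θ +
      (h φ * Real.sin φ + deriv h φ * Real.cos φ) * Real.sin θ with hg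
  have hderiv : ∀ φ, HasDerivAt g (bodyRho h φ * Real.sin (θ - φ)) φ := by
    intro φ
    have Hh : HasDerivAt h (deriv h φ) φ := (d1 φ).hasDerivAt
    have Hh' : HasDerivAt (deriv h) (deriv (deriv h) φ) φ := (d2 φ).hasDerivAt
    have Hc : HasDerivAt Real.cos (-Real.sin φ) φ := Real.hasDerivAt_cos φ
    have Hs : HasDerivAt Real.sin (Real.cos φ) φ := Real.hasDerivAt_sin φ
    have H := (((Hh.mul Hc).sub (Hh'.mul Hs)).mul_const (Real.cos θ)).add
      (((Hh.mul Hs).add (Hh'.mul Hc)).mul_const (Real.sin θ))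
    refine H.congr_deriv ?_
    unfold bodyRho
    rw [Real.sin_sub]; ring
  have gcont : Continuous g := by
    have : Differentiable ℝ g := fun φ => (hderiv φ).differentiableAt
    exact this.continuous
  have mono : StrictMonoOn g (Set.Icc (θ - π) θ) := by
    apply strictMonoOn_of_deriv_pos (convex_Icc _ _) gcont.continuousOn
    intro φ hφ
    rw [interior_Icc] at hφ
    rw [(hderiv φ).deriv]
    exact mul_pos (hρ φ)
      (Real.sin_pos_of_pos_of_lt_pi (by linarith [hφ.2]) (by linarith [hφ.1]))
  have pi_pos := Real.pi_pos
  have hlt : g (θ - π) < g θ :=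
    mono ⟨le_refl _, by linarith⟩ ⟨by linarith, le_refl _⟩ (by linarith)
  have hπ : h (θ - π) = h θ := by
    have := hs (θ - π); rw [sub_add_cancel] at this; exact this.symm
  have hπ' : deriv h (θ - π) = deriv h θ := by
    have := myPeriodic_deriv hs (θ - π); rw [sub_add_cancel] at this; exact this.symm
  have e1 : g θ = h θ := by
    rw [hg]
    simp only
    linear_combination (h θ) * (Real.sin_sq_add_cos_sq θ)
  have e2 : g (θ - π) = -h θ := by
    rw [hg]
    simp only [Real.cos_sub, Real.sin_sub, Real.cos_pi, Real.sin_pi, hπ, hπ']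
    linear_combination (-(h θ)) * (Real.sin_sq_add_cos_sq θ)
  rw [e1, e2] at hlt
  linarith

/-- Green representation: for a `π`-periodic `C²` function,
`2 f θ = ∫_θ^{θ+π} sin(τ-θ) (f + f'') dτ`. -/
lemma rep (hf : ContDiff ℝ 2 f) (hp : Function.Periodic f π) (θ : ℝ) :
    2 * f θ = ∫ τ in θ..(θ + π), Real.sin (τ - θ) * (f τ + deriv (deriv f) τ) := by
  have d1 : Differentiable ℝ f := myDiff1 hf
  have d2 : Differentiable ℝ (deriv f) := myDiff2 hf
  have c2 : Continuous (deriv (deriv f)) := myCont2 hf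
  have c1 : Continuous (deriv f) := d2.continuous
  have c0 : Continuous f := d1.continuous
  have csin : Continuous fun τ : ℝ => Real.sin (τ - θ) := by continuity
  have ccos : Continuous fun τ : ℝ => Real.cos (τ - θ) := by continuity
  have hsin : ∀ τ : ℝ, HasDerivAt (fun τ => Real.sin (τ - θ)) (Real.cos (τ - θ)) τ := by
    intro τ
    simpa using ((hasDerivAt_id' τ).sub_const θ).sin
  have hcos : ∀ τ : ℝ, HasDerivAt (fun τ => Real.cos (τ - θ)) (-Real.sin (τ - θ)) τ := by
    intro τ
    simpa using ((hasDerivAt_id' τ).sub_const θ).cos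
  have I1 : (∫ τ in θ..(θ + π), Real.sin (τ - θ) * deriv (deriv f) τ)
      = Real.sin (θ + π - θ) * deriv f (θ + π) - Real.sin (θ - θ) * deriv f θ
        - ∫ τ in θ..(θ + π), Real.cos (τ - θ) * deriv f τ :=
    integral_mul_deriv_eq_deriv_mul (fun x _ => hsin x) (fun x _ => (d2 x).hasDerivAt)
      (ccos.intervalIntegrable _ _) (c2.intervalIntegrable _ _)
  have I2 : (∫ τ in θ..(θ + π), Real.cos (τ - θ) * deriv f τ)
      = Real.cos (θ + π - θ) * f (θ + π) - Real.cos (θ - θ) * f θ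
        - ∫ τ in θ..(θ + π), -Real.sin (τ - θ) * f τ :=
    integral_mul_deriv_eq_deriv_mul (fun x _ => hcos x) (fun x _ => (d1 x).hasDerivAt)
      ((csin.neg).intervalIntegrable _ _) (c1.intervalIntegrable _ _)
  have I3 : (∫ τ in θ..(θ + π), -Real.sin (τ - θ) * f τ)
      = -∫ τ in θ..(θ + π), Real.sin (τ - θ) * f τ := by
    rw [← intervalIntegral.integral_neg]
    congr 1; funext τ; ring
  have split : (∫ τ in θ..(θ + π), Real.sin (τ - θ) * (f τ + deriv (deriv f) τ))
      = (∫ τ in θ..(θ + π), Real.sin (τ - θ) * f τ)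
        + ∫ τ in θ..(θ + π), Real.sin (τ - θ) * deriv (deriv f) τ := by
    rw [← intervalIntegral.integral_add (f := fun τ => Real.sin (τ - θ) * f τ)
      (g := fun τ => Real.sin (τ - θ) * deriv (deriv f) τ) ((csin.mul c0).intervalIntegrable _ _)
      ((csin.mul c2).intervalIntegrable _ _)]
    congr 1; funext τ; ring
  rw [split, I1, I2, I3]
  rw [add_sub_cancel_left, sub_self, Real.sin_pi, Real.sin_zero, Real.cos_pi, Real.cos_zero,
    hp θ]
  ring

lemma density_eq (cK : ContDiff ℝ 2 hK) (cL : ContDiff ℝ 2 hL)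
    (pK : Function.Periodic hK (2 * π)) (pL : Function.Periodic hL (2 * π))
    (hKpos : ∀ θ, 0 < hK θ) (hLpos : ∀ θ, 0 < hL θ)
    (ρKpos : ∀ θ, 0 < bodyRho hK θ) (ρLpos : ∀ θ, 0 < bodyRho hL θ)
    (hcone : coneVolumeMeasure hK = coneVolumeMeasure hL) :
    ∀ θ, hK θ * bodyRho hK θ = hL θ * bodyRho hL θ := by
  have two_pi_pos : 0 < 2 * π := by positivity
  set fK : ℝ → ℝ := fun θ => (1 / 2) * (hK θ * bodyRho hK θ) with hfK
  set fL : ℝ → ℝ := fun θ => (1 / 2) * (hL θ * bodyRho hL θ) with hfL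
  have contK : Continuous fK := by
    unfold fK; unfold bodyRho
    exact continuous_const.mul (cK.continuous.mul (cK.continuous.add (myCont2 cK)))
  have contL : Continuous fL := by
    unfold fL; unfold bodyRho
    exact continuous_const.mul (cL.continuous.mul (cL.continuous.add (myCont2 cL)))
  have fKpos : ∀ θ, 0 < fK θ := fun θ => by
    have := mul_pos (hKpos θ) (ρKpos θ); unfold fK; positivity
  have fLpos : ∀ θ, 0 < fL θ := fun θ => by
    have := mul_pos (hLpos θ) (ρLpos θ); unfold fL; positivity
  set μ := volume.restrict (Set.Ico (0:ℝ) (2 * π)) with hμ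
  have hae : (fun θ => ENNReal.ofReal (fK θ)) =ᵐ[μ] fun θ => ENNReal.ofReal (fL θ) := by
    refine (withDensity_eq_iff_of_sigmaFinite ?_ ?_).mp hcone
    · exact (ENNReal.continuous_ofReal.comp contK).measurable.aemeasurable
    · exact (ENNReal.continuous_ofReal.comp contL).measurable.aemeasurable
  have hae2 : ∀ᵐ x ∂(volume : Measure ℝ), x ∈ Set.Ico (0:ℝ) (2*π) →
      ENNReal.ofReal (fK x) = ENNReal.ofReal (fL x) := by
    rw [hμ] at hae
    exact (ae_restrict_iff' measurableSet_Ico).mp hae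
  have hnull : volume {x | ¬ (x ∈ Set.Ico (0:ℝ) (2*π) →
      ENNReal.ofReal (fK x) = ENNReal.ofReal (fL x))} = 0 := ae_iff.mp hae2
  have eqIco : ∀ θ ∈ Set.Ico (0:ℝ) (2*π), fK θ = fL θ := by
    by_contra hcon
    push_neg at hcon
    obtain ⟨θ0, hθ0, hne⟩ := hcon
    have hU : IsOpen {x | fK x ≠ fL x} := isOpen_ne_fun contK contL
    obtain ⟨ε, εpos, hball⟩ := Metric.isOpen_iff.mp hU θ0 hne
    set b := min (θ0 + ε) (2 * π) with hb
    have hθ0b : θ0 < b := lt_min (by linarith) hθ0.2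
    have hsub : Set.Ioo θ0 b ⊆ {x | ¬ (x ∈ Set.Ico (0:ℝ) (2*π) →
        ENNReal.ofReal (fK x) = ENNReal.ofReal (fL x))} := by
      intro x hx
      have hx1 : x ∈ Set.Ico (0:ℝ) (2*π) :=
        ⟨le_trans hθ0.1 hx.1.le, lt_of_lt_of_le hx.2 (min_le_right _ _)⟩
      have hx2 : x ∈ Metric.ball θ0 ε := by
        rw [Metric.mem_ball, Real.dist_eq, abs_lt]
        constructor
        · linarith [hx.1]
        · have := lt_of_lt_of_le hx.2 (min_le_left _ _); linarith
      have hx3 : fK x ≠ fL x := hball hx2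
      intro hcontra
      exact hx3 ((ENNReal.ofReal_eq_ofReal_iff (fKpos x).le (fLpos x).le).mp (hcontra hx1))
    have : volume (Set.Ioo θ0 b) = 0 := measure_mono_null hsub hnull
    rw [Real.volume_Ioo] at this
    rw [ENNReal.ofReal_eq_zero] at this
    linarith
  -- extend by periodicity
  intro θ
  set g : ℝ → ℝ := fun θ => hK θ * bodyRho hK θ - hL θ * bodyRho hL θ with hgdef
  have gper : Function.Periodic g (2 * π) := by
    have pK2 := myPeriodic_deriv (myPeriodic_deriv pK)
    have pL2 := myPeriodic_deriv (myPeriodic_deriv pL)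
    intro x
    simp only [hgdef, bodyRho]
    rw [pK x, pL x, pK2 x, pL2 x]
  obtain ⟨y, hy, hxy⟩ := gper.exists_mem_Ico₀ two_pi_pos θ
  have hgy : g y = 0 := by
    have h0 := eqIco y hy
    simp only [hfK, hfL] at h0
    simp only [hgdef]
    linarith
  have hgθ : g θ = 0 := by rw [hxy, hgy]
  simp only [hgdef] at hgθ
  linarith

lemma main_uniq (cK : ContDiff ℝ 2 hK) (cL : ContDiff ℝ 2 hL)
    (sK : Function.Periodic hK π) (sL : Function.Periodic hL π)
    (hKpos : ∀ θ, 0 < hK θ) (hLpos : ∀ θ, 0 < hL θ)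
    (ρKpos : ∀ θ, 0 < bodyRho hK θ) (ρLpos : ∀ θ, 0 < bodyRho hL θ)
    (hF : ∀ θ, hK θ * bodyRho hK θ = hL θ * bodyRho hL θ) : hK = hL := by
  have pi_pos := Real.pi_pos
  set v : ℝ → ℝ := fun θ => hK θ - hL θ with hv
  set w : ℝ → ℝ := fun θ => hK θ + hL θ with hw
  have cv : ContDiff ℝ 2 v := cK.sub cL
  have cw : ContDiff ℝ 2 w := cK.add cL
  have wpos : ∀ θ, 0 < w θ := fun θ => by
    have := hKpos θ; have := hLpos θ; simp only [hw]; linarith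
  have pv : Function.Periodic v π := fun x => by simp only [hv, sK x, sL x]
  have pw : Function.Periodic w π := fun x => by simp only [hw, sK x, sL x]
  have dd_v : ∀ τ, deriv (deriv v) τ = deriv (deriv hK) τ - deriv (deriv hL) τ := by
    have e1 : deriv v = fun τ => deriv hK τ - deriv hL τ :=
      funext fun τ => deriv_sub (myDiff1 cK τ) (myDiff1 cL τ)
    intro τ; rw [e1]; exact deriv_sub (myDiff2 cK τ) (myDiff2 cL τ)
  have dd_w : ∀ τ, deriv (deriv w) τ = deriv (deriv hK) τ + deriv (deriv hL) τ := by
    have e1 : deriv w = fun τ => deriv hK τ + deriv hL τ :=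
      funext fun τ => deriv_add (myDiff1 cK τ) (myDiff1 cL τ)
    intro τ; rw [e1]; exact deriv_add (myDiff2 cK τ) (myDiff2 cL τ)
  set Q : ℝ → ℝ := fun τ => w τ + deriv (deriv w) τ with hQ
  have Qrho : ∀ τ, Q τ = bodyRho hK τ + bodyRho hL τ := by
    intro τ; simp only [hQ]; rw [dd_w τ]; simp only [hw, bodyRho]; ring
  have Qpos : ∀ τ, 0 < Q τ := fun τ => by
    rw [Qrho τ]; have := ρKpos τ; have := ρLpos τ; linarith
  have Qcont : Continuous Q := by
    simp only [hQ]; exact cw.continuous.add (myCont2 cw)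
  have vcont : Continuous v := cv.continuous
  set z : ℝ → ℝ := fun τ => v τ / w τ with hz
  have zcont : Continuous z := vcont.div cw.continuous (fun τ => (wpos τ).ne')
  have pz : Function.Periodic z π := fun x => by simp only [hz, pv x, pw x]
  have vzw : ∀ τ, v τ = z τ * w τ := fun τ => by
    simp only [hz]; rw [div_mul_cancel₀ _ (wpos τ).ne']
  have keyv : ∀ τ, v τ + deriv (deriv v) τ = -(Q τ * z τ) := by
    intro τ
    have h1 : v τ + deriv (deriv v) τ = bodyRho hK τ - bodyRho hL τ := by
      rw [dd_v τ]; simp only [hv, bodyRho]; ring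
    rw [h1, Qrho τ]
    simp only [hz, hv, hw]
    have hwne : hK τ + hL τ ≠ 0 := (wpos τ).ne'
    field_simp
    linear_combination (2:ℝ) * hF τ
  -- the master identity
  have Kc : ∀ (θ cc : ℝ),
      (∫ τ in θ..(θ + π), Real.sin (τ - θ) * (Q τ * (z τ + cc)))
        = -(2 * v θ) + cc * (2 * w θ) := by
    intro θ cc
    have csin : Continuous fun τ : ℝ => Real.sin (τ - θ) := Real.continuous_sin.comp (continuous_id.sub continuous_const)
    have int1 : IntervalIntegrable
        (fun τ => -(Real.sin (τ - θ) * (v τ + deriv (deriv v) τ))) volume θ (θ + π) :=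
      ((csin.mul (vcont.add (myCont2 cv))).neg).intervalIntegrable _ _
    have int2 : IntervalIntegrable
        (fun τ => cc * (Real.sin (τ - θ) * Q τ)) volume θ (θ + π) :=
      (continuous_const.mul (csin.mul Qcont)).intervalIntegrable _ _
    have e1 : (∫ τ in θ..(θ + π), Real.sin (τ - θ) * (Q τ * (z τ + cc)))
        = ∫ τ in θ..(θ + π), (-(Real.sin (τ - θ) * (v τ + deriv (deriv v) τ))
            + cc * (Real.sin (τ - θ) * Q τ)) := by
      apply intervalIntegral.integral_congr
      intro τ _
      simp only [keyv τ]
      ring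
    rw [e1, intervalIntegral.integral_add int1 int2]
    rw [intervalIntegral.integral_neg, intervalIntegral.integral_const_mul]
    rw [← rep cv pv θ]
    have e2 : (∫ τ in θ..(θ + π), Real.sin (τ - θ) * Q τ)
        = ∫ τ in θ..(θ + π), Real.sin (τ - θ) * (w τ + deriv (deriv w) τ) := by
      apply intervalIntegral.integral_congr
      intro τ _; simp only [hQ]
    rw [e2, ← rep cw pw θ]
  -- extrema of z
  obtain ⟨θ1, hθ1mem, hθ1max⟩ :=
    isCompact_Icc.exists_isMaxOn (Set.nonempty_Icc.mpr pi_pos.le) zcont.continuousOn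
  obtain ⟨θ2, hθ2mem, hθ2min⟩ :=
    isCompact_Icc.exists_isMinOn (Set.nonempty_Icc.mpr pi_pos.le) zcont.continuousOn
  set M := z θ1 with hM
  set m := z θ2 with hm
  have zleM : ∀ τ, z τ ≤ M := by
    intro τ
    obtain ⟨y, hy, he⟩ := pz.exists_mem_Ico₀ pi_pos τ
    rw [he]
    exact isMaxOn_iff.mp hθ1max y (Set.Ico_subset_Icc_self hy)
  have mlez : ∀ τ, m ≤ z τ := by
    intro τ
    obtain ⟨y, hy, he⟩ := pz.exists_mem_Ico₀ pi_pos τ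
    rw [he]
    exact isMinOn_iff.mp hθ2min y (Set.Ico_subset_Icc_self hy)
  have sin_nn : ∀ (θ : ℝ) (τ : ℝ), τ ∈ Set.Icc θ (θ + π) → 0 ≤ Real.sin (τ - θ) := by
    intro θ τ hτ
    apply Real.sin_nonneg_of_nonneg_of_le_pi <;> [linarith [hτ.1]; linarith [hτ.2]]
  have csin : ∀ θ : ℝ, Continuous fun τ : ℝ => Real.sin (τ - θ) := fun θ => Real.continuous_sin.comp (continuous_id.sub continuous_const)
  have intQz : ∀ (θ cc : ℝ), IntervalIntegrable
      (fun τ => Real.sin (τ - θ) * (Q τ * (z τ + cc))) volume θ (θ + π) := fun θ cc =>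
    ((csin θ).mul (Qcont.mul (zcont.add continuous_const))).intervalIntegrable _ _
  have intQc : ∀ (θ cc : ℝ), IntervalIntegrable
      (fun τ => Real.sin (τ - θ) * (Q τ * cc)) volume θ (θ + π) := fun θ cc =>
    ((csin θ).mul (Qcont.mul continuous_const)).intervalIntegrable _ _
  have constInt : ∀ (θ cc : ℝ),
      (∫ τ in θ..(θ + π), Real.sin (τ - θ) * (Q τ * cc)) = cc * (2 * w θ) := by
    intro θ cc
    have e1 : (∫ τ in θ..(θ + π), Real.sin (τ - θ) * (Q τ * cc))
        = ∫ τ in θ..(θ + π), cc * (Real.sin (τ - θ) * Q τ) := by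
      apply intervalIntegral.integral_congr; intro τ _; simp only; ring
    rw [e1, intervalIntegral.integral_const_mul]
    have e2 : (∫ τ in θ..(θ + π), Real.sin (τ - θ) * Q τ)
        = ∫ τ in θ..(θ + π), Real.sin (τ - θ) * (w τ + deriv (deriv w) τ) := by
      apply intervalIntegral.integral_congr; intro τ _; simp only [hQ]
    rw [e2, ← rep cw pw θ]
  -- step 1 : m + M ≤ 0
  have step1 : m + M ≤ 0 := by
    have hle : (∫ τ in θ1..(θ1 + π), Real.sin (τ - θ1) * (Q τ * (m + M)))
        ≤ ∫ τ in θ1..(θ1 + π), Real.sin (τ - θ1) * (Q τ * (z τ + M)) := by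
      apply intervalIntegral.integral_mono_on (by linarith) (intQc θ1 (m + M)) (intQz θ1 M)
      intro τ hτ
      have h1 := sin_nn θ1 τ hτ
      have h2 := (Qpos τ).le
      have h3 := mlez τ
      nlinarith [mul_nonneg (mul_nonneg h1 h2) (sub_nonneg.mpr h3)]
    rw [constInt θ1 (m + M), Kc θ1 M] at hle
    have hv1 : v θ1 = M * w θ1 := by rw [vzw θ1, hM]
    rw [hv1] at hle
    nlinarith [wpos θ1]
  -- step 2 : 0 ≤ M + m
  have step2 : 0 ≤ m + M := by
    have hle : (∫ τ in θ2..(θ2 + π), Real.sin (τ - θ2) * (Q τ * (z τ + m)))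
        ≤ ∫ τ in θ2..(θ2 + π), Real.sin (τ - θ2) * (Q τ * (M + m)) := by
      apply intervalIntegral.integral_mono_on (by linarith) (intQz θ2 m) (intQc θ2 (M + m))
      intro τ hτ
      have h1 := sin_nn θ2 τ hτ
      have h2 := (Qpos τ).le
      have h3 := zleM τ
      nlinarith [mul_nonneg (mul_nonneg h1 h2) (sub_nonneg.mpr h3)]
    rw [constInt θ2 (M + m), Kc θ2 m] at hle
    have hv2 : v θ2 = m * w θ2 := by rw [vzw θ2, hm]
    rw [hv2] at hle
    nlinarith [wpos θ2]
  have hmM : m = -M := by linarith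
  -- step 3 : equality case forces z θ1 = m
  set G : ℝ → ℝ := fun τ => Real.sin (τ - θ1) * (Q τ * (z τ - m)) with hG
  have Gcont : Continuous G := by
    simp only [hG]
    exact (csin θ1).mul (Qcont.mul (zcont.sub continuous_const))
  have Gnonneg : ∀ τ ∈ Set.Icc θ1 (θ1 + π), 0 ≤ G τ := by
    intro τ hτ
    have h1 := sin_nn θ1 τ hτ
    have h2 := (Qpos τ).le
    have h3 := mlez τ
    simp only [hG]
    nlinarith [mul_nonneg (mul_nonneg h1 h2) (sub_nonneg.mpr h3)]
  have Gzero : (∫ τ in θ1..(θ1 + π), G τ) = 0 := by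
    have e1 : (∫ τ in θ1..(θ1 + π), G τ)
        = ∫ τ in θ1..(θ1 + π), Real.sin (τ - θ1) * (Q τ * (z τ + (-m))) := by
      apply intervalIntegral.integral_congr; intro τ _
      simp only [hG]; ring
    rw [e1, Kc θ1 (-m), hmM]
    have hv1 : v θ1 = M * w θ1 := by rw [vzw θ1, hM]
    rw [hv1]; ring
  have Gae : G =ᵐ[volume.restrict (Set.Ioc θ1 (θ1 + π))] 0 := by
    refine (intervalIntegral.integral_eq_zero_iff_of_le_of_nonneg_ae (by linarith) ?_
      (Gcont.intervalIntegrable _ _)).mp Gzero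
    exact (ae_restrict_iff' measurableSet_Ioc).mpr
      (ae_of_all _ fun τ hτ => Gnonneg τ (Set.Ioc_subset_Icc_self hτ))
  have Gpt : ∀ τ ∈ Set.Ioo θ1 (θ1 + π), G τ = 0 := by
    by_contra hcon
    push_neg at hcon
    obtain ⟨τ0, hτ0, hne⟩ := hcon
    have hU : IsOpen {x | G x ≠ 0} := isOpen_ne_fun Gcont continuous_const
    obtain ⟨ε, εpos, hball⟩ := Metric.isOpen_iff.mp hU τ0 hne
    set b := min (τ0 + ε) (θ1 + π) with hb
    have hτ0b : τ0 < b := lt_min (by linarith) hτ0.2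
    have hnull : volume {x | ¬ (x ∈ Set.Ioc θ1 (θ1 + π) → G x = 0)} = 0 := by
      have := (ae_restrict_iff' measurableSet_Ioc).mp Gae
      exact ae_iff.mp this
    have hsub : Set.Ioo τ0 b ⊆ {x | ¬ (x ∈ Set.Ioc θ1 (θ1 + π) → G x = 0)} := by
      intro x hx
      have hx1 : x ∈ Set.Ioc θ1 (θ1 + π) :=
        ⟨lt_trans hτ0.1 hx.1, le_trans hx.2.le (min_le_right _ _)⟩
      have hx2 : x ∈ Metric.ball τ0 ε := by
        rw [Metric.mem_ball, Real.dist_eq, abs_lt]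
        constructor
        · linarith [hx.1]
        · have := lt_of_lt_of_le hx.2 (min_le_left _ _); linarith
      intro hcontra
      exact hball hx2 (hcontra hx1)
    have h0 : volume (Set.Ioo τ0 b) = 0 := measure_mono_null hsub hnull
    rw [Real.volume_Ioo, ENNReal.ofReal_eq_zero] at h0
    linarith
  have zm : ∀ τ ∈ Set.Ioo θ1 (θ1 + π), z τ = m := by
    intro τ hτ
    have h0 := Gpt τ hτ
    simp only [hG] at h0
    have hsin : 0 < Real.sin (τ - θ1) :=
      Real.sin_pos_of_pos_of_lt_pi (by linarith [hτ.1]) (by linarith [hτ.2])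
    have hQτ := Qpos τ
    rcases mul_eq_zero.mp h0 with h | h
    · exact absurd h hsin.ne'
    · rcases mul_eq_zero.mp h with h' | h'
      · exact absurd h' hQτ.ne'
      · linarith [sub_eq_zero.mp h']
  have zθ1 : z θ1 = m := by
    have h1 : Filter.Tendsto z (nhdsWithin θ1 (Set.Ioi θ1)) (nhds (z θ1)) :=
      (zcont.tendsto θ1).mono_left nhdsWithin_le_nhds
    have h2 : Filter.Tendsto z (nhdsWithin θ1 (Set.Ioi θ1)) (nhds m) := by
      apply Filter.Tendsto.congr' _ tendsto_const_nhds
      filter_upwards [Ioo_mem_nhdsGT (show θ1 < θ1 + π by linarith)] with x hx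
      exact (zm x hx).symm
    exact tendsto_nhds_unique h1 h2
  have hM0 : M = 0 := by rw [hM] at *; linarith [zθ1, hmM]
  have hm0 : m = 0 := by rw [hmM, hM0]; ring
  -- conclude
  funext θ
  have hzθ : z θ = 0 := le_antisymm (hM0 ▸ zleM θ) (hm0 ▸ mlez θ)
  have hvθ : v θ = 0 := by rw [vzw θ, hzθ]; ring
  simp only [hv] at hvθ
  linarith

end Stmt5Aux

/-- **uniqueness of the planar log-Minkowski problem for smooth
symmetric bodies.** If two origin-symmetric planar convex bodies with `C²`
boundaries of positive curvature have the same cone-volume measure, they coincide. -/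
theorem stmt5 (hK hL : ℝ → ℝ) (bK : IsSmoothBody hK) (bL : IsSmoothBody hL)
    (sK : OriginSymmetric hK) (sL : OriginSymmetric hL)
    (hcone : coneVolumeMeasure hK = coneVolumeMeasure hL) :
    hK = hL := by
  obtain ⟨cK, pK, ρK⟩ := bK
  obtain ⟨cL, pL, ρL⟩ := bL
  have sK' : Function.Periodic hK π := sK
  have sL' : Function.Periodic hL π := sL
  have hKpos := body_pos cK ρK sK'
  have hLpos := body_pos cL ρL sL'
  have hF := density_eq cK cL pK pL hKpos hLpos ρK ρL hcone
  exact main_uniq cK cL sK' sL' hKpos hLpos ρK ρL hF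
end

section
/- Let K and L be convex bodies in ℝ² with C² boundaries of positive curvature containing the origin in their interiors. Then (∫_{S¹} (h_K/h_L) dV_K)·(∫_{S¹} (κ_K/κ_L) dV_L) ≥ V(K,L)². -/
open Real MeasureTheory intervalIntegral

/-- Cauchy–Schwarz for interval integrals of continuous functions. -/
lemma cs_integral (f g : ℝ → ℝ) (hf : Continuous f) (hg : Continuous g) :
    (∫ x in (0:ℝ)..(2 * π), f x * g x) ^ 2 ≤
      (∫ x in (0:ℝ)..(2 * π), f x ^ 2) * (∫ x in (0:ℝ)..(2 * π), g x ^ 2) := by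
  set A := ∫ x in (0:ℝ)..(2 * π), f x ^ 2 with hA
  set B := ∫ x in (0:ℝ)..(2 * π), f x * g x with hB
  set C := ∫ x in (0:ℝ)..(2 * π), g x ^ 2 with hC
  have h2π : (0:ℝ) ≤ 2 * π := by positivity
  have key : ∀ s : ℝ, 0 ≤ C * (s * s) + (-2 * B) * s + A := by
    intro s
    have hnn : 0 ≤ ∫ x in (0:ℝ)..(2 * π), (s * g x - f x) ^ 2 :=
      intervalIntegral.integral_nonneg h2π (fun x _ => sq_nonneg _)
    have hexp : (∫ x in (0:ℝ)..(2 * π), (s * g x - f x) ^ 2)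
        = C * (s * s) + (-2 * B) * s + A := by
      have h1 : ∀ x : ℝ, (s * g x - f x) ^ 2
          = (s * s) * g x ^ 2 + ((-2 * s) * (f x * g x) + f x ^ 2) := by
        intro x; ring
      rw [intervalIntegral.integral_congr (fun x _ => h1 x)]
      rw [intervalIntegral.integral_add, intervalIntegral.integral_add,
        intervalIntegral.integral_const_mul, intervalIntegral.integral_const_mul]
      · ring
      · exact (continuous_const.mul (hf.mul hg)).intervalIntegrable _ _
      · exact (hf.pow 2).intervalIntegrable _ _
      · exact (continuous_const.mul (hg.pow 2)).intervalIntegrable _ _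
      · exact ((continuous_const.mul (hf.mul hg)).add (hf.pow 2)).intervalIntegrable _ _
    linarith [hexp ▸ hnn]
  have hd := discrim_le_zero key
  rw [discrim] at hd
  nlinarith [hd]

/-- The derivative of a periodic function is periodic. -/
lemma periodic_deriv' (f : ℝ → ℝ) (c : ℝ) (hp : Function.Periodic f c) :
    Function.Periodic (deriv f) c := by
  intro x
  have hfun : (fun y => f (y + c)) = f := funext hp
  rw [← deriv_comp_add_const f c, hfun]

/-- Symmetry of the mixed volume via integration by parts. -/
lemma mixed_symm (hK hL : ℝ → ℝ) (bK : IsSmoothBody hK) (bL : IsSmoothBody hL) :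
    (∫ θ in (0:ℝ)..(2 * π), hL θ * bodyRho hK θ)
      = ∫ θ in (0:ℝ)..(2 * π), hK θ * bodyRho hL θ := by
  obtain ⟨cK, perK, _⟩ := bK
  obtain ⟨cL, perL, _⟩ := bL
  have one_le_two : (1:ℕ) ≤ 2 := by norm_num
  have dK : Differentiable ℝ hK := cK.differentiable (by norm_num)
  have dL : Differentiable ℝ hL := cL.differentiable (by norm_num)
  have cK2 : ContDiff ℝ ((1:ℕ) + 1) hK := by
    rw [show ((1:ℕ) + 1 : WithTop ℕ∞) = 2 by norm_num]; exact cK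
  have cL2 : ContDiff ℝ ((1:ℕ) + 1) hL := by
    rw [show ((1:ℕ) + 1 : WithTop ℕ∞) = 2 by norm_num]; exact cL
  have cK' : ContDiff ℝ 1 (deriv hK) := (contDiff_succ_iff_deriv.mp cK2).2.2
  have cL' : ContDiff ℝ 1 (deriv hL) := (contDiff_succ_iff_deriv.mp cL2).2.2
  have dK' : Differentiable ℝ (deriv hK) := cK'.differentiable one_ne_zero
  have dL' : Differentiable ℝ (deriv hL) := cL'.differentiable one_ne_zero
  have contK : Continuous hK := cK.continuous
  have contL : Continuous hL := cL.continuous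
  have contK' : Continuous (deriv hK) := cK'.continuous
  have contL' : Continuous (deriv hL) := cL'.continuous
  have contK'' : Continuous (deriv (deriv hK)) := cK'.continuous_deriv le_rfl
  have contL'' : Continuous (deriv (deriv hL)) := cL'.continuous_deriv le_rfl
  -- integration by parts: ∫ u * v'' = u(b)v'(b) - u(a)v'(a) - ∫ u' v'
  have parts : ∀ u v : ℝ → ℝ, Differentiable ℝ u → Differentiable ℝ (deriv v) →
      Continuous (deriv u) → Continuous (deriv (deriv v)) →
      Function.Periodic u (2 * π) → Function.Periodic (deriv v) (2 * π) →
      (∫ θ in (0:ℝ)..(2 * π), u θ * deriv (deriv v) θ)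
        = - ∫ θ in (0:ℝ)..(2 * π), deriv u θ * deriv v θ := by
    intro u v du dv' cu' cv'' pu pv'
    have h := intervalIntegral.integral_mul_deriv_eq_deriv_mul
      (u := u) (v := deriv v) (u' := deriv u) (v' := deriv (deriv v))
      (a := (0:ℝ)) (b := 2 * π)
      (fun x _ => (du x).hasDerivAt)
      (fun x _ => (dv' x).hasDerivAt)
      (cu'.intervalIntegrable _ _)
      (cv''.intervalIntegrable _ _)
    have hb1 : u (2 * π) = u 0 := by simpa using pu 0
    have hb2 : deriv v (2 * π) = deriv v 0 := by simpa using pv' 0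
    rw [h, hb1, hb2]; ring
  have perK' : Function.Periodic (deriv hK) (2 * π) := periodic_deriv' _ _ perK
  have perL' : Function.Periodic (deriv hL) (2 * π) := periodic_deriv' _ _ perL
  have e1 : (∫ θ in (0:ℝ)..(2 * π), hL θ * deriv (deriv hK) θ)
      = - ∫ θ in (0:ℝ)..(2 * π), deriv hL θ * deriv hK θ :=
    parts hL hK dL dK' contL' contK'' perL perK'
  have e2 : (∫ θ in (0:ℝ)..(2 * π), hK θ * deriv (deriv hL) θ)
      = - ∫ θ in (0:ℝ)..(2 * π), deriv hK θ * deriv hL θ :=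
    parts hK hL dK dL' contK' contL'' perK perL'
  have e3 : (∫ θ in (0:ℝ)..(2 * π), deriv hL θ * deriv hK θ)
      = ∫ θ in (0:ℝ)..(2 * π), deriv hK θ * deriv hL θ :=
    intervalIntegral.integral_congr (fun x _ => mul_comm _ _)
  have split1 : (∫ θ in (0:ℝ)..(2 * π), hL θ * bodyRho hK θ)
      = (∫ θ in (0:ℝ)..(2 * π), hL θ * hK θ)
        + ∫ θ in (0:ℝ)..(2 * π), hL θ * deriv (deriv hK) θ := by
    rw [← intervalIntegral.integral_add (f := fun x => hL x * hK x) (g := fun x => hL x * deriv (deriv hK) x) ((contL.mul contK).intervalIntegrable _ _)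
      ((contL.mul contK'').intervalIntegrable _ _)]
    exact intervalIntegral.integral_congr (fun x _ => by simp [bodyRho, mul_add])
  have split2 : (∫ θ in (0:ℝ)..(2 * π), hK θ * bodyRho hL θ)
      = (∫ θ in (0:ℝ)..(2 * π), hK θ * hL θ)
        + ∫ θ in (0:ℝ)..(2 * π), hK θ * deriv (deriv hL) θ := by
    rw [← intervalIntegral.integral_add (f := fun x => hK x * hL x) (g := fun x => hK x * deriv (deriv hL) x) ((contK.mul contL).intervalIntegrable _ _)
      ((contK.mul contL'').intervalIntegrable _ _)]
    exact intervalIntegral.integral_congr (fun x _ => by simp [bodyRho, mul_add])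
  have e4 : (∫ θ in (0:ℝ)..(2 * π), hL θ * hK θ)
      = ∫ θ in (0:ℝ)..(2 * π), hK θ * hL θ :=
    intervalIntegral.integral_congr (fun x _ => mul_comm _ _)
  rw [split1, split2, e1, e2, e3, e4]

/-- For planar convex bodies `K, L` with `C²` boundaries of
positive curvature containing the origin in their interiors,
`(∫_{S¹} (h_K/h_L) dV_K) (∫_{S¹} (κ_K/κ_L) dV_L) ≥ V(K,L)²`. -/
theorem stmt8 (hK hL : ℝ → ℝ) (bK : IsSmoothBody hK) (bL : IsSmoothBody hL)
    (pK : ∀ θ : ℝ, 0 < hK θ) (pL : ∀ θ : ℝ, 0 < hL θ) :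
    coneIntegral hK (fun θ => hK θ / hL θ) *
      coneIntegral hL (fun θ => bodyCurv hK θ / bodyCurv hL θ) ≥
      (bodyMixedVol hK hL) ^ 2 := by
  obtain ⟨cK, perK, rK⟩ := bK
  obtain ⟨cL, perL, rL⟩ := bL
  have contK : Continuous hK := cK.continuous
  have contL : Continuous hL := cL.continuous
  have cK2 : ContDiff ℝ ((1:ℕ) + 1) hK := by
    rw [show ((1:ℕ) + 1 : WithTop ℕ∞) = 2 by norm_num]; exact cK
  have cL2 : ContDiff ℝ ((1:ℕ) + 1) hL := by
    rw [show ((1:ℕ) + 1 : WithTop ℕ∞) = 2 by norm_num]; exact cL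
  have contRK : Continuous (bodyRho hK) :=
    contK.add ((contDiff_succ_iff_deriv.mp cK2).2.2.continuous_deriv le_rfl)
  have contRL : Continuous (bodyRho hL) :=
    contL.add ((contDiff_succ_iff_deriv.mp cL2).2.2.continuous_deriv le_rfl)
  set f : ℝ → ℝ := fun θ => hK θ * Real.sqrt (bodyRho hK θ / hL θ) with hf
  set g : ℝ → ℝ := fun θ => bodyRho hL θ * Real.sqrt (hL θ / bodyRho hK θ) with hg
  have contf : Continuous f :=
    contK.mul ((contRK.div contL (fun x => (pL x).ne')).sqrt)
  have contg : Continuous g :=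
    contRL.mul ((contL.div contRK (fun x => (rK x).ne')).sqrt)
  have hfg : ∀ x, f x * g x = hK x * bodyRho hL x := by
    intro x
    have h1 : (0:ℝ) ≤ bodyRho hK x / hL x := le_of_lt (div_pos (rK x) (pL x))
    have h2 : bodyRho hK x / hL x * (hL x / bodyRho hK x) = 1 := by
      rw [div_mul_div_comm, mul_comm (bodyRho hK x)]
      exact div_self (mul_pos (pL x) (rK x)).ne'
    simp only [hf, hg]
    rw [mul_mul_mul_comm, ← Real.sqrt_mul h1, h2, Real.sqrt_one, mul_one]
  have hf2 : ∀ x, f x ^ 2 = (hK x / hL x) * (hK x * bodyRho hK x) := by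
    intro x
    have h1 : (0:ℝ) ≤ bodyRho hK x / hL x := le_of_lt (div_pos (rK x) (pL x))
    simp only [hf]
    rw [mul_pow, Real.sq_sqrt h1]
    field_simp
  have hg2 : ∀ x, g x ^ 2 = (bodyCurv hK x / bodyCurv hL x) * (hL x * bodyRho hL x) := by
    intro x
    have h1 : (0:ℝ) ≤ hL x / bodyRho hK x := le_of_lt (div_pos (pL x) (rK x))
    simp only [hg, bodyCurv]
    rw [mul_pow, Real.sq_sqrt h1]
    have hk := (rK x).ne'
    have hl := (rL x).ne'
    field_simp
  have cs := cs_integral f g contf contg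
  have eq1 : (∫ x in (0:ℝ)..(2 * π), f x ^ 2)
      = ∫ θ in (0:ℝ)..(2 * π), (hK θ / hL θ) * (hK θ * bodyRho hK θ) :=
    intervalIntegral.integral_congr (fun x _ => hf2 x)
  have eq2 : (∫ x in (0:ℝ)..(2 * π), g x ^ 2)
      = ∫ θ in (0:ℝ)..(2 * π), (bodyCurv hK θ / bodyCurv hL θ) * (hL θ * bodyRho hL θ) :=
    intervalIntegral.integral_congr (fun x _ => hg2 x)
  have eq3 : (∫ x in (0:ℝ)..(2 * π), f x * g x)
      = ∫ θ in (0:ℝ)..(2 * π), hL θ * bodyRho hK θ := by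
    rw [intervalIntegral.integral_congr (fun x _ => hfg x)]
    exact (mixed_symm hK hL ⟨cK, perK, rK⟩ ⟨cL, perL, rL⟩).symm
  rw [eq1, eq2, eq3] at cs
  simp only [coneIntegral, bodyMixedVol, ge_iff_le]
  nlinarith [cs]
end

section
/- Let K and L be origin-symmetric convex bodies in ℝ² with C² boundaries of positive curvature. Then ∫_{S¹} (κ_K/κ_L)² dV_{L,K} + V(K)·V(L,K)/V(L) ≥ 2·V(L,K), where dV_{L,K} = (1/2)(h_K/κ_L) du is the mixed cone-volume measure. -/
open Real MeasureTheory intervalIntegral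

/-- The integral `∫_{S¹} f dV_{L,K}` of `f` against the mixed cone-volume measure
`dV_{L,K} = (1/2) h_K dS_L = (1/2) h_K (h_L + h_L'') dθ`. -/
noncomputable def mixedConeIntegral (hL hK f : ℝ → ℝ) : ℝ :=
  (1 / 2) * ∫ θ in (0:ℝ)..(2 * π), f θ * (hK θ * bodyRho hL θ)

lemma my_hasDerivAt_primitive (f : ℝ → ℝ) (hf : Continuous f) (x : ℝ) :
    HasDerivAt (fun y => ∫ t in (0:ℝ)..y, f t) (f x) x :=
  integral_hasDerivAt_right (hf.intervalIntegrable _ _)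
    (hf.stronglyMeasurableAtFilter _ _) hf.continuousAt

lemma my_primitive_sub (f : ℝ → ℝ) (hf : Continuous f) (x y : ℝ) :
    (∫ t in (0:ℝ)..y, f t) - ∫ t in (0:ℝ)..x, f t = ∫ t in x..y, f t :=
  intervalIntegral.integral_interval_sub_left (hf.intervalIntegrable _ _)
    (hf.intervalIntegrable _ _)

lemma my_periodic_deriv (f : ℝ → ℝ) (c : ℝ) (hf : Function.Periodic f c) :
    Function.Periodic (deriv f) c := by
  intro x
  rw [← deriv_comp_add_const]
  congr 1
  funext y; exact hf y

lemma my_smooth (h : ℝ → ℝ) (hb : ContDiff ℝ 2 h) :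
    Differentiable ℝ h ∧ Differentiable ℝ (deriv h) ∧ Continuous (deriv (deriv h)) := by
  have h2 : ContDiff ℝ ((1:ℕ∞)+1) h := by exact_mod_cast hb
  rw [contDiff_succ_iff_deriv] at h2
  have h1 : ContDiff ℝ 1 (deriv h) := by exact_mod_cast h2.2.2
  rw [contDiff_one_iff_deriv] at h1
  exact ⟨h2.1, h1.1, h1.2⟩

lemma my_cs (f g : ℝ → ℝ) (a b : ℝ) (hab : a ≤ b) (hf : Continuous f) (hg : Continuous g)
    (hgg : 0 < ∫ θ in a..b, g θ ^ 2) :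
    (∫ θ in a..b, f θ * g θ) ^ 2 ≤ (∫ θ in a..b, f θ ^ 2) * ∫ θ in a..b, g θ ^ 2 := by
  set Z : ℝ := ∫ θ in a..b, g θ ^ 2 with hZ
  set Y : ℝ := ∫ θ in a..b, f θ * g θ with hY
  set X : ℝ := ∫ θ in a..b, f θ ^ 2 with hX
  set t : ℝ := Y / Z with ht
  have h0 : (0:ℝ) ≤ ∫ θ in a..b, (f θ - t * g θ) ^ 2 :=
    intervalIntegral.integral_nonneg hab (fun u _ => sq_nonneg _)
  have hexp : (∫ θ in a..b, (f θ - t * g θ) ^ 2) = X - 2 * t * Y + t ^ 2 * Z := by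
    have e1 : ∀ θ, (f θ - t * g θ) ^ 2
        = (f θ ^ 2 - 2 * t * (f θ * g θ)) + t ^ 2 * g θ ^ 2 := by intro θ; ring
    simp_rw [e1]
    rw [intervalIntegral.integral_add
        (by apply Continuous.intervalIntegrable; fun_prop)
        (by apply Continuous.intervalIntegrable; fun_prop),
      intervalIntegral.integral_sub
        (by apply Continuous.intervalIntegrable; fun_prop)
        (by apply Continuous.intervalIntegrable; fun_prop),
      intervalIntegral.integral_const_mul, intervalIntegral.integral_const_mul]
  rw [hexp] at h0
  have h1 : t * Z = Y := div_mul_cancel₀ _ (ne_of_gt hgg)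
  have h2 : X - 2 * t * Y + t ^ 2 * Z = X - t * Y := by
    have : t ^ 2 * Z = t * (t * Z) := by ring
    rw [this, h1]; ring
  rw [h2] at h0
  have h3 : t * Y * Z = Y ^ 2 := by rw [ht]; field_simp
  nlinarith [mul_nonneg h0 (le_of_lt hgg)]

lemma my_swap (f : ℝ → ℝ → ℝ) (hf : Continuous (Function.uncurry f)) (a b c d : ℝ)
    (hab : a ≤ b) (hcd : c ≤ d) :
    ∫ x in a..b, (∫ y in c..d, f x y) = ∫ y in c..d, ∫ x in a..b, f x y := by
  rw [intervalIntegral.integral_of_le hab, intervalIntegral.integral_of_le hcd]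
  simp_rw [intervalIntegral.integral_of_le hcd, intervalIntegral.integral_of_le hab]
  apply MeasureTheory.integral_integral_swap
  rw [Measure.prod_restrict]
  apply (hf.continuousOn.integrableOn_compact (isCompact_Icc.prod isCompact_Icc)).mono_set
  · exact Set.prod_mono Set.Ioc_subset_Icc_self Set.Ioc_subset_Icc_self

lemma my_wirtinger (P : ℝ) (hP : 0 < P) (u : ℝ → ℝ)
    (hu : Differentiable ℝ u) (hu' : Continuous (deriv u))
    (hper : Function.Periodic u P) (hmean : (∫ θ in (0:ℝ)..P, u θ) = 0) :
    (∫ θ in (0:ℝ)..P, u θ ^ 2) ≤ P ^ 2 / 24 * ∫ θ in (0:ℝ)..P, deriv u θ ^ 2 := by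
  have hu_cont : Continuous u := hu.continuous
  set g : ℝ → ℝ := fun θ => deriv u θ ^ 2 with hg_def
  have hg : Continuous g := hu'.pow 2
  have hg_per : Function.Periodic g P := fun x => by
    simp only [hg_def, my_periodic_deriv u P hper x]
  set Ig : ℝ := ∫ θ in (0:ℝ)..P, g θ with hIg
  set Iu : ℝ := ∫ θ in (0:ℝ)..P, u θ ^ 2 with hIu
  set F : ℝ → ℝ := fun x => ∫ t in (0:ℝ)..x, g t with hF
  have hF_cont : Continuous F :=
    Differentiable.continuous (fun x => (my_hasDerivAt_primitive g hg x).differentiableAt)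
  have Fdiff : ∀ x y : ℝ, F y - F x = ∫ t in x..y, g t := by
    intro x y
    rw [hF]
    rw [← intervalIntegral.integral_interval_sub_left (hg.intervalIntegrable _ _)
      (hg.intervalIntegrable _ _)]
  have gshift : ∀ s : ℝ, (∫ t in s..(s+P), g t) = Ig := by
    intro s
    have := hg_per.intervalIntegral_add_eq s 0
    simpa using this
  -- pointwise Cauchy-Schwarz bound
  have ptbound : ∀ θ t : ℝ, 0 < t → (u (θ + t) - u θ) ^ 2 ≤ t * (F (θ + t) - F θ) := by
    intro θ t ht
    set m : ℝ := (u (θ + t) - u θ) / t with hm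
    have base : (∫ x in θ..(θ+t), deriv u x) = u (θ + t) - u θ :=
      intervalIntegral.integral_deriv_eq_sub (fun x _ => hu.differentiableAt)
        (hu'.intervalIntegrable _ _)
    have hsq : (0:ℝ) ≤ ∫ x in θ..(θ+t), (deriv u x - m) ^ 2 :=
      intervalIntegral.integral_nonneg (by linarith) (fun x _ => sq_nonneg _)
    have hexp : (∫ x in θ..(θ+t), (deriv u x - m) ^ 2)
        = (F (θ + t) - F θ) - 2 * m * (u (θ + t) - u θ) + m ^ 2 * t := by
      have e1 : ∀ x, (deriv u x - m) ^ 2 = (g x - 2 * m * deriv u x) + m ^ 2 := by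
        intro x; simp only [hg_def]; ring
      simp_rw [e1]
      rw [intervalIntegral.integral_add
          (by apply Continuous.intervalIntegrable; fun_prop)
          (by apply Continuous.intervalIntegrable; fun_prop),
        intervalIntegral.integral_sub
          (by apply Continuous.intervalIntegrable; fun_prop)
          (by apply Continuous.intervalIntegrable; fun_prop),
        intervalIntegral.integral_const_mul, base, intervalIntegral.integral_const,
        Fdiff θ (θ + t)]
      simp
      ring
    rw [hexp] at hsq
    have hmt : m * t = u (θ + t) - u θ := div_mul_cancel₀ _ (ne_of_gt ht)
    nlinarith [hsq, sq_nonneg m]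
  -- D and C
  set D : ℝ → ℝ := fun t => ∫ θ in (0:ℝ)..P, (u (θ + t) - u θ) ^ 2 with hD
  set C : ℝ → ℝ := fun t => ∫ θ in (0:ℝ)..P, u (θ + t) * u θ with hC
  have hD_cont : Continuous D := by
    apply continuous_parametric_intervalIntegral_of_continuous'
    fun_prop
  have hC_cont : Continuous C := by
    apply continuous_parametric_intervalIntegral_of_continuous'
    fun_prop
  have usq_shift : ∀ t : ℝ, (∫ θ in (0:ℝ)..P, u (θ + t) ^ 2) = Iu := by
    intro t
    have e1 : (∫ θ in (0:ℝ)..P, u (θ + t) ^ 2) = ∫ x in (0+t)..(P+t), u x ^ 2 :=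
      intervalIntegral.integral_comp_add_right (fun x => u x ^ 2) t
    rw [e1]
    have hsqper : Function.Periodic (fun x => u x ^ 2) P := fun x => by simp [hper x]
    have := hsqper.intervalIntegral_add_eq t 0
    simp only [zero_add] at this
    rw [show (0:ℝ) + t = t by ring, show P + t = t + P by ring, this]
  have Dexp : ∀ t : ℝ, D t = 2 * Iu - 2 * C t := by
    intro t
    have e1 : ∀ θ, (u (θ + t) - u θ) ^ 2
        = (u (θ + t) ^ 2 - 2 * (u (θ + t) * u θ)) + u θ ^ 2 := by intro θ; ring
    simp only [hD]
    simp_rw [e1]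
    rw [intervalIntegral.integral_add
        (by apply Continuous.intervalIntegrable; fun_prop)
        (by apply Continuous.intervalIntegrable; fun_prop),
      intervalIntegral.integral_sub
        (by apply Continuous.intervalIntegrable; fun_prop)
        (by apply Continuous.intervalIntegrable; fun_prop),
      intervalIntegral.integral_const_mul, usq_shift t]
    simp only [hC, hIu]
    ring
  have Cint : (∫ t in (0:ℝ)..P, C t) = 0 := by
    simp only [hC]
    rw [my_swap (fun t θ => u (θ + t) * u θ) (by fun_prop) 0 P 0 P hP.le hP.le]
    have inner0 : ∀ θ : ℝ, (∫ t in (0:ℝ)..P, u (θ + t) * u θ) = 0 := by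
      intro θ
      rw [show (fun t => u (θ + t) * u θ) = fun t => u (θ + t) * u θ from rfl]
      rw [intervalIntegral.integral_mul_const]
      have e1 : (∫ t in (0:ℝ)..P, u (θ + t)) = ∫ x in (0+θ)..(P+θ), u x := by
        simp_rw [add_comm θ]
        exact intervalIntegral.integral_comp_add_right u θ
      have e2 := hper.intervalIntegral_add_eq θ 0
      simp only [zero_add] at e2
      rw [e1, show (0:ℝ) + θ = θ by ring, show P + θ = θ + P by ring, e2, hmean, zero_mul]
    rw [intervalIntegral.integral_congr (fun θ _ => inner0 θ)]
    simp
  have Dbound : ∀ t : ℝ, 0 ≤ t → D t ≤ t ^ 2 * Ig := by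
    intro t ht
    rcases eq_or_lt_of_le ht with rfl | htpos
    · simp only [hD, add_zero, sub_self]
      simp
    · have step1 : D t ≤ ∫ θ in (0:ℝ)..P, t * (F (θ + t) - F θ) := by
        apply intervalIntegral.integral_mono_on hP.le
        · apply Continuous.intervalIntegrable; fun_prop
        · exact (continuous_const.mul
            ((hF_cont.comp (continuous_id.add continuous_const)).sub hF_cont)).intervalIntegrable _ _
        · intro θ _; exact ptbound θ t htpos
      have hFt : Continuous fun θ : ℝ => F (θ + t) :=
        hF_cont.comp (continuous_id.add continuous_const)
      have hFP : Continuous fun s : ℝ => F (s + P) :=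
        hF_cont.comp (continuous_id.add continuous_const)
      have step2 : (∫ θ in (0:ℝ)..P, t * (F (θ + t) - F θ)) = t * (t * Ig) := by
        rw [intervalIntegral.integral_const_mul]
        congr 1
        rw [intervalIntegral.integral_sub (hFt.intervalIntegrable _ _)
            (hF_cont.intervalIntegrable _ _)]
        have e1 : (∫ θ in (0:ℝ)..P, F (θ + t)) = ∫ x in (0+t)..(P+t), F x :=
          intervalIntegral.integral_comp_add_right F t
        have split1 : (∫ x in (0+t)..(P+t), F x)
            = (∫ x in (0+t)..P, F x) + ∫ x in P..(P+t), F x :=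
          (intervalIntegral.integral_add_adjacent_intervals
            (hF_cont.intervalIntegrable _ _) (hF_cont.intervalIntegrable _ _)).symm
        have split2 : (∫ x in (0:ℝ)..P, F x)
            = (∫ x in (0:ℝ)..(0+t), F x) + ∫ x in (0+t)..P, F x :=
          (intervalIntegral.integral_add_adjacent_intervals
            (hF_cont.intervalIntegrable _ _) (hF_cont.intervalIntegrable _ _)).symm
        have e3 : (∫ x in P..(P+t), F x) = ∫ s in (0:ℝ)..t, F (s + P) := by
          rw [intervalIntegral.integral_comp_add_right F P]
          norm_num
          rw [add_comm t P]
        have e4 : (∫ s in (0:ℝ)..t, F (s + P)) - (∫ x in (0:ℝ)..(0+t), F x)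
            = ∫ s in (0:ℝ)..t, (F (s + P) - F s) := by
          rw [intervalIntegral.integral_sub (hFP.intervalIntegrable _ _)
            (hF_cont.intervalIntegrable _ _)]
          norm_num
        have e5 : (∫ s in (0:ℝ)..t, (F (s + P) - F s)) = ∫ s in (0:ℝ)..t, Ig := by
          apply intervalIntegral.integral_congr
          intro s _
          show F (s + P) - F s = Ig
          rw [Fdiff s (s + P), gshift s]
        rw [e1, split1, split2, e3]
        rw [show ((∫ x in (0+t)..P, F x) + ∫ s in (0:ℝ)..t, F (s + P))
              - ((∫ x in (0:ℝ)..(0+t), F x) + ∫ x in (0+t)..P, F x)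
            = (∫ s in (0:ℝ)..t, F (s + P)) - (∫ x in (0:ℝ)..(0+t), F x) by ring, e4, e5]
        simp
      calc D t ≤ ∫ θ in (0:ℝ)..P, t * (F (θ + t) - F θ) := step1
        _ = t * (t * Ig) := step2
        _ = t ^ 2 * Ig := by ring
  have Drefl : ∀ t : ℝ, D (P - t) = D t := by
    intro t
    have e1 : ∀ θ, (u (θ + (P - t)) - u θ) ^ 2 = (u (θ - t) - u θ) ^ 2 := by
      intro θ
      have : θ + (P - t) = (θ - t) + P := by ring
      rw [this, hper (θ - t)]
    simp only [hD]
    rw [intervalIntegral.integral_congr (fun θ _ => e1 θ)]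
    have e2 : (∫ θ in (0:ℝ)..P, (u (θ - t) - u θ) ^ 2)
        = ∫ x in (0-t)..(P-t), (u x - u (x + t)) ^ 2 := by
      rw [← intervalIntegral.integral_comp_sub_right (a := (0:ℝ)) (b := P)
        (fun x => (u x - u (x + t)) ^ 2) t]
      apply intervalIntegral.integral_congr
      intro θ _
      simp [sub_add_cancel]
    rw [e2]
    have hψper : Function.Periodic (fun x => (u x - u (x + t)) ^ 2) P := by
      intro x
      simp only
      rw [hper x, show x + P + t = (x + t) + P by ring, hper (x + t)]
    have := hψper.intervalIntegral_add_eq (-t) 0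
    simp only [zero_add] at this
    rw [show (0:ℝ) - t = -t by ring, show P - t = -t + P by ring, this]
    apply intervalIntegral.integral_congr
    intro θ _
    ring_nf
  -- assemble
  have IntD : (∫ t in (0:ℝ)..P, D t) = 2 * P * Iu := by
    rw [intervalIntegral.integral_congr (fun t (_ : t ∈ Set.uIcc 0 P) => Dexp t)]
    rw [intervalIntegral.integral_sub intervalIntegrable_const
        (Continuous.intervalIntegrable (u := fun t => 2 * C t) (continuous_const.mul hC_cont) _ _)]
    rw [show (∫ t in (0:ℝ)..P, 2 * C t) = 2 * ∫ t in (0:ℝ)..P, C t from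
        intervalIntegral.integral_const_mul 2 C, Cint, intervalIntegral.integral_const]
    simp
    ring
  have split : (∫ t in (0:ℝ)..P, D t) = 2 * ∫ t in (0:ℝ)..(P/2), D t := by
    have s1 : (∫ t in (0:ℝ)..P, D t) = (∫ t in (0:ℝ)..(P/2), D t) + ∫ t in (P/2)..P, D t :=
      (intervalIntegral.integral_add_adjacent_intervals (hD_cont.intervalIntegrable _ _)
        (hD_cont.intervalIntegrable _ _)).symm
    have s2 : (∫ t in (P/2)..P, D t) = ∫ t in (0:ℝ)..(P/2), D t := by
      have e := intervalIntegral.integral_comp_sub_left (a := (0:ℝ)) (b := P/2) D P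
      rw [show P - P/2 = P/2 by ring, show P - (0:ℝ) = P by ring] at e
      rw [← e]
      exact intervalIntegral.integral_congr (fun t _ => Drefl t)
    linarith [s1, s2]
  have bound : (∫ t in (0:ℝ)..(P/2), D t) ≤ ∫ t in (0:ℝ)..(P/2), t ^ 2 * Ig := by
    apply intervalIntegral.integral_mono_on (by positivity)
    · exact hD_cont.intervalIntegrable _ _
    · apply Continuous.intervalIntegrable; fun_prop
    · intro t ht; exact Dbound t ht.1
  have intt : (∫ t in (0:ℝ)..(P/2), t ^ 2 * Ig) = (P / 2) ^ 3 / 3 * Ig := by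
    rw [intervalIntegral.integral_mul_const, integral_pow]
    norm_num
  have final : 2 * P * Iu ≤ P ^ 3 / 12 * Ig := by
    have := bound
    rw [intt] at this
    nlinarith [this, split, IntD]
  nlinarith [final, hP, sq_nonneg P]

lemma my_parts (f g : ℝ → ℝ) (T : ℝ)
    (hf : Differentiable ℝ f) (hg : Differentiable ℝ g)
    (hf' : Continuous (deriv f)) (hg' : Continuous (deriv g))
    (hfT : f T = f 0) (hgT : g T = g 0) :
    (∫ θ in (0:ℝ)..T, deriv f θ * g θ) = - ∫ θ in (0:ℝ)..T, f θ * deriv g θ := by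
  have key : (∫ θ in (0:ℝ)..T, deriv f θ * g θ + f θ * deriv g θ)
      = f T * g T - f 0 * g 0 :=
    intervalIntegral.integral_deriv_mul_eq_sub
      (fun x _ => (hf x).hasDerivAt) (fun x _ => (hg x).hasDerivAt)
      (hf'.intervalIntegrable _ _) (hg'.intervalIntegrable _ _)
  rw [intervalIntegral.integral_add
      (Continuous.intervalIntegrable (u := fun θ => deriv f θ * g θ) (hf'.mul hg.continuous) _ _)
      (Continuous.intervalIntegrable (u := fun θ => f θ * deriv g θ) (hf.continuous.mul hg') _ _), hfT, hgT] at key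
  linarith [key]

-- halving for π-periodic functions

lemma my_halve (φ : ℝ → ℝ) (hφ : Continuous φ) (hper : Function.Periodic φ π) :
    (∫ θ in (0:ℝ)..(2*π), φ θ) = 2 * ∫ θ in (0:ℝ)..π, φ θ := by
  have s1 : (∫ θ in (0:ℝ)..(2*π), φ θ)
      = (∫ θ in (0:ℝ)..π, φ θ) + ∫ θ in π..(2*π), φ θ :=
    (intervalIntegral.integral_add_adjacent_intervals
      (hφ.intervalIntegrable _ _) (hφ.intervalIntegrable _ _)).symm
  have s2 : (∫ θ in π..(2*π), φ θ) = ∫ θ in (0:ℝ)..π, φ θ := by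
    have := hper.intervalIntegral_add_eq π 0
    simp only [zero_add] at this
    rw [show (2:ℝ)*π = π + π by ring, this]
  rw [s1, s2]; ring

lemma my_body_pos (h : ℝ → ℝ) (hb : IsSmoothBody h) (hs : OriginSymmetric h) (θ₀ : ℝ) :
    0 < h θ₀ := by
  obtain ⟨hc2, _, hpos⟩ := hb
  obtain ⟨hd, hd', hcont''⟩ := my_smooth h hc2
  have hπ : Function.Periodic h π := hs
  have hcont : Continuous h := hd.continuous
  have hcont' : Continuous (deriv h) := hd'.continuous
  set ρ : ℝ → ℝ := fun θ => h θ + deriv (deriv h) θ with hρdef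
  have hρcont : Continuous ρ := hcont.add hcont''
  have hρpos : ∀ θ, 0 < ρ θ := hpos
  have hρper : Function.Periodic ρ π := by
    intro x
    simp only [hρdef]
    rw [hπ x, my_periodic_deriv _ _ (my_periodic_deriv _ _ hπ) x]
  set f : ℝ → ℝ := fun s => ρ s * Real.sin s with hfdef
  set fc : ℝ → ℝ := fun s => ρ s * Real.cos s with hfcdef
  have hfcont : Continuous f := by fun_prop
  have hfccont : Continuous fc := by fun_prop
  have hfanti : ∀ s, f (s + π) = - f s := by
    intro s; simp only [hfdef]; rw [hρper s, Real.sin_add_pi]; ring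
  have hfcanti : ∀ s, fc (s + π) = - fc s := by
    intro s; simp only [hfcdef]; rw [hρper s, Real.cos_add_pi]; ring
  set A : ℝ → ℝ := fun θ => ∫ s in θ..(θ + π), f s with hAdef
  set B : ℝ → ℝ := fun θ => ∫ s in θ..(θ + π), fc s with hBdef
  have hAeq : ∀ θ, A θ = (∫ t in (0:ℝ)..(θ+π), f t) - ∫ t in (0:ℝ)..θ, f t := by
    intro θ; rw [my_primitive_sub f hfcont]
  have hBeq : ∀ θ, B θ = (∫ t in (0:ℝ)..(θ+π), fc t) - ∫ t in (0:ℝ)..θ, fc t := by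
    intro θ; rw [my_primitive_sub fc hfccont]
  have hA : ∀ θ, HasDerivAt A (-2 * f θ) θ := by
    intro θ
    have h1 := (my_hasDerivAt_primitive f hfcont (θ + π)).comp θ
      ((hasDerivAt_id θ).add_const π)
    have h2 := my_hasDerivAt_primitive f hfcont θ
    have h3 := h1.sub h2
    have : A = fun θ => ((fun y => ∫ t in (0:ℝ)..y, f t) ∘ fun θ => θ + π) θ
        - ∫ t in (0:ℝ)..θ, f t := by
      funext x; rw [hAeq x]; rfl
    rw [this]
    convert h3 using 1
    rotate_right
    rw [hfanti θ]; ring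
    all_goals rfl
  have hB : ∀ θ, HasDerivAt B (-2 * fc θ) θ := by
    intro θ
    have h1 := (my_hasDerivAt_primitive fc hfccont (θ + π)).comp θ
      ((hasDerivAt_id θ).add_const π)
    have h2 := my_hasDerivAt_primitive fc hfccont θ
    have h3 := h1.sub h2
    have : B = fun θ => ((fun y => ∫ t in (0:ℝ)..y, fc t) ∘ fun θ => θ + π) θ
        - ∫ t in (0:ℝ)..θ, fc t := by
      funext x; rw [hBeq x]; rfl
    rw [this]
    convert h3 using 1
    rotate_right
    rw [hfcanti θ]; ring
    all_goals rfl
  set G : ℝ → ℝ := fun θ => Real.cos θ * A θ - Real.sin θ * B θ with hGdef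
  set G1 : ℝ → ℝ := fun θ => -(Real.sin θ) * A θ - Real.cos θ * B θ with hG1def
  have hG : ∀ θ, HasDerivAt G (G1 θ) θ := by
    intro θ
    have h1 := ((Real.hasDerivAt_cos θ).mul (hA θ)).sub ((Real.hasDerivAt_sin θ).mul (hB θ))
    convert h1 using 1
    rotate_right
    simp only [hG1def, hfdef, hfcdef]
    ring
    all_goals rfl
  have hG1 : ∀ θ, HasDerivAt G1 (2 * ρ θ - G θ) θ := by
    intro θ
    have h1 := (((Real.hasDerivAt_sin θ).neg).mul (hA θ)).sub
      ((Real.hasDerivAt_cos θ).mul (hB θ))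
    convert h1 using 1
    rotate_right
    simp only [hGdef, hfdef, hfcdef, Pi.neg_apply]
    have := Real.sin_sq_add_cos_sq θ
    linear_combination (-2 * ρ θ) * this
    all_goals rfl
  set u : ℝ → ℝ := fun θ => G θ - 2 * h θ with hudef
  set u1 : ℝ → ℝ := fun θ => G1 θ - 2 * deriv h θ with hu1def
  have hu : ∀ θ, HasDerivAt u (u1 θ) θ := by
    intro θ
    exact (hG θ).sub ((hd θ).hasDerivAt.const_mul 2)
  have hu1 : ∀ θ, HasDerivAt u1 (- u θ) θ := by
    intro θ
    have h1 := (hG1 θ).sub ((hd' θ).hasDerivAt.const_mul 2)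
    convert h1 using 1
    rotate_right
    simp only [hudef, hρdef]
    ring
    all_goals rfl
  set c1 : ℝ → ℝ := fun θ => u θ * Real.cos θ - u1 θ * Real.sin θ with hc1def
  set c2 : ℝ → ℝ := fun θ => u θ * Real.sin θ + u1 θ * Real.cos θ with hc2def
  have hc1 : ∀ θ, HasDerivAt c1 0 θ := by
    intro θ
    have h1 := ((hu θ).mul (Real.hasDerivAt_cos θ)).sub ((hu1 θ).mul (Real.hasDerivAt_sin θ))
    convert h1 using 1
    rotate_right
    ring
    all_goals rfl
  have hc2 : ∀ θ, HasDerivAt c2 0 θ := by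
    intro θ
    have h1 := ((hu θ).mul (Real.hasDerivAt_sin θ)).add ((hu1 θ).mul (Real.hasDerivAt_cos θ))
    convert h1 using 1
    rotate_right
    ring
    all_goals rfl
  have hc1const : ∀ θ, c1 θ = c1 0 :=
    fun θ => is_const_of_deriv_eq_zero (fun x => (hc1 x).differentiableAt)
      (fun x => (hc1 x).deriv) θ 0
  have hc2const : ∀ θ, c2 θ = c2 0 :=
    fun θ => is_const_of_deriv_eq_zero (fun x => (hc2 x).differentiableAt)
      (fun x => (hc2 x).deriv) θ 0
  have urep : ∀ θ, u θ = c1 0 * Real.cos θ + c2 0 * Real.sin θ := by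
    intro θ
    rw [← hc1const θ, ← hc2const θ]
    simp only [hc1def, hc2def]
    have := Real.sin_sq_add_cos_sq θ
    linear_combination (- u θ) * this
  -- periodicity of u
  have hGper : Function.Periodic G π := by
    intro θ
    have hAanti : A (θ + π) = - A θ := by
      simp only [hAdef]
      have e1 : (∫ s in (θ+π)..(θ+π+π), f s) = ∫ s in θ..(θ+π), f (s + π) :=
        (intervalIntegral.integral_comp_add_right f π).symm
      rw [e1]
      rw [intervalIntegral.integral_congr (g := fun s => - f s) (fun s _ => hfanti s)]
      rw [intervalIntegral.integral_neg]
    have hBanti : B (θ + π) = - B θ := by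
      simp only [hBdef]
      have e1 : (∫ s in (θ+π)..(θ+π+π), fc s) = ∫ s in θ..(θ+π), fc (s + π) :=
        (intervalIntegral.integral_comp_add_right fc π).symm
      rw [e1]
      rw [intervalIntegral.integral_congr (g := fun s => - fc s) (fun s _ => hfcanti s)]
      rw [intervalIntegral.integral_neg]
    simp only [hGdef]
    rw [hAanti, hBanti, Real.cos_add_pi, Real.sin_add_pi]
    ring
  have huper : Function.Periodic u π := by
    intro θ
    simp only [hudef]
    rw [hGper θ, hπ θ]
  -- kill the coefficients
  have hu0 : c1 0 = 0 := by
    have e1 := huper 0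
    rw [urep (0 + π), urep 0] at e1
    simp [Real.cos_pi, Real.sin_pi] at e1
    linarith
  have hu1' : c2 0 = 0 := by
    have e1 := huper (π/2)
    rw [urep (π/2 + π), urep (π/2)] at e1
    simp [Real.cos_add_pi, Real.sin_add_pi] at e1
    linarith
  have hu_zero : ∀ θ, u θ = 0 := by
    intro θ; rw [urep θ, hu0, hu1']; ring
  -- h = G / 2 and positivity
  have hGrep : h θ₀ = (1/2) * ∫ s in θ₀..(θ₀ + π), ρ s * Real.sin (s - θ₀) := by
    have e0 : G θ₀ = 2 * h θ₀ := by
      have := hu_zero θ₀; simp only [hudef] at this; linarith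
    have e1 : (∫ s in θ₀..(θ₀ + π), ρ s * Real.sin (s - θ₀))
        = Real.cos θ₀ * A θ₀ - Real.sin θ₀ * B θ₀ := by
      simp only [hAdef, hBdef]
      rw [← intervalIntegral.integral_const_mul, ← intervalIntegral.integral_const_mul,
        ← intervalIntegral.integral_sub (by apply Continuous.intervalIntegrable; fun_prop)
          (by apply Continuous.intervalIntegrable; fun_prop)]
      apply intervalIntegral.integral_congr
      intro s _
      simp only [hfdef, hfcdef]
      rw [Real.sin_sub]
      ring
    rw [e1]
    simp only [hGdef] at e0
    linarith
  rw [hGrep]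
  have hlt : θ₀ < θ₀ + π := by linarith [Real.pi_pos]
  have hipos : 0 < ∫ s in θ₀..(θ₀ + π), ρ s * Real.sin (s - θ₀) := by
    apply intervalIntegral_pos_of_pos_on
    · apply Continuous.intervalIntegrable; fun_prop
    · intro s hy
      apply mul_pos (hρpos s)
      apply Real.sin_pos_of_pos_of_lt_pi <;> [linarith [hy.1]; linarith [hy.2]]
    · exact hlt
  linarith

lemma my_core_neg (w : ℝ → ℝ) (hw : Differentiable ℝ w) (hw' : Continuous (deriv w))
    (hper : Function.Periodic w π) (hmean : (∫ θ in (0:ℝ)..(2*π), w θ) = 0) :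
    (∫ θ in (0:ℝ)..(2*π), (w θ ^ 2 - deriv w θ ^ 2)) ≤ 0 := by
  have hwc : Continuous w := hw.continuous
  have h2 : (∫ θ in (0:ℝ)..(2*π), w θ) = 2 * ∫ θ in (0:ℝ)..π, w θ := my_halve w hwc hper
  have hmean' : (∫ θ in (0:ℝ)..π, w θ) = 0 := by rw [h2] at hmean; linarith
  have hwir := my_wirtinger π pi_pos w hw hw' hper hmean'
  have hIg : 0 ≤ ∫ θ in (0:ℝ)..π, deriv w θ ^ 2 :=
    intervalIntegral.integral_nonneg pi_pos.le (fun _ _ => sq_nonneg _)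
  have hcoef : π ^ 2 / 24 ≤ 1 := by nlinarith [pi_le_four, pi_pos]
  have h3 : (∫ θ in (0:ℝ)..π, w θ ^ 2) ≤ ∫ θ in (0:ℝ)..π, deriv w θ ^ 2 := by
    calc (∫ θ in (0:ℝ)..π, w θ ^ 2) ≤ π ^ 2 / 24 * ∫ θ in (0:ℝ)..π, deriv w θ ^ 2 := hwir
      _ ≤ 1 * ∫ θ in (0:ℝ)..π, deriv w θ ^ 2 := by
          apply mul_le_mul_of_nonneg_right hcoef hIg
      _ = ∫ θ in (0:ℝ)..π, deriv w θ ^ 2 := one_mul _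
  have e1 : (∫ θ in (0:ℝ)..(2*π), (w θ ^ 2 - deriv w θ ^ 2))
      = (∫ θ in (0:ℝ)..(2*π), w θ ^ 2) - ∫ θ in (0:ℝ)..(2*π), deriv w θ ^ 2 :=
    intervalIntegral.integral_sub ((hwc.pow 2).intervalIntegrable _ _)
      ((hw'.pow 2).intervalIntegrable _ _)
  have e2 : (∫ θ in (0:ℝ)..(2*π), w θ ^ 2) = 2 * ∫ θ in (0:ℝ)..π, w θ ^ 2 :=
    my_halve _ (hwc.pow 2) (fun x => congrArg (fun y => y ^ 2) (hper x))
  have e3 : (∫ θ in (0:ℝ)..(2*π), deriv w θ ^ 2) = 2 * ∫ θ in (0:ℝ)..π, deriv w θ ^ 2 :=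
    my_halve _ (hw'.pow 2) (fun x => congrArg (fun y => y ^ 2) (my_periodic_deriv w π hper x))
  rw [e1, e2, e3]
  linarith

lemma my_bilin (h₁ h₂ : ℝ → ℝ) (hd₁ : Differentiable ℝ h₁) (hc₁' : Continuous (deriv h₁))
    (hc₂ : Continuous h₂) (hd₂' : Differentiable ℝ (deriv h₂))
    (hc₂'' : Continuous (deriv (deriv h₂)))
    (hp₁ : h₁ (2*π) = h₁ 0) (hp₂' : deriv h₂ (2*π) = deriv h₂ 0) :
    (∫ θ in (0:ℝ)..(2*π), h₁ θ * bodyRho h₂ θ)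
      = ∫ θ in (0:ℝ)..(2*π), (h₁ θ * h₂ θ - deriv h₁ θ * deriv h₂ θ) := by
  have parts := my_parts (deriv h₂) h₁ (2*π) hd₂' hd₁ hc₂'' hc₁' hp₂' hp₁
  have e1 : (∫ θ in (0:ℝ)..(2*π), h₁ θ * bodyRho h₂ θ)
      = (∫ θ in (0:ℝ)..(2*π), h₁ θ * h₂ θ)
        + ∫ θ in (0:ℝ)..(2*π), deriv (deriv h₂) θ * h₁ θ := by
    rw [← intervalIntegral.integral_add
      (Continuous.intervalIntegrable (u := fun θ => h₁ θ * h₂ θ) (hd₁.continuous.mul hc₂) _ _)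
      (Continuous.intervalIntegrable (u := fun θ => deriv (deriv h₂) θ * h₁ θ) (hc₂''.mul hd₁.continuous) _ _)]
    apply intervalIntegral.integral_congr
    intro θ _
    simp only [bodyRho]
    ring
  have e2 : (∫ θ in (0:ℝ)..(2*π), (h₁ θ * h₂ θ - deriv h₁ θ * deriv h₂ θ))
      = (∫ θ in (0:ℝ)..(2*π), h₁ θ * h₂ θ)
        - ∫ θ in (0:ℝ)..(2*π), deriv h₂ θ * deriv h₁ θ := by
    rw [← intervalIntegral.integral_sub
      (Continuous.intervalIntegrable (u := fun θ => h₁ θ * h₂ θ) (hd₁.continuous.mul hc₂) _ _)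
      (Continuous.intervalIntegrable (u := fun θ => deriv h₂ θ * deriv h₁ θ) (hd₂'.continuous.mul hc₁') _ _)]
    apply intervalIntegral.integral_congr
    intro θ _
    ring
  rw [e1, e2]
  linarith [parts]

lemma my_pos_integral (f : ℝ → ℝ) (hf : Continuous f) (hpos : ∀ θ, 0 < f θ) :
    0 < ∫ θ in (0:ℝ)..(2*π), f θ := by
  apply intervalIntegral_pos_of_pos_on (hf.intervalIntegrable _ _)
    (fun x _ => hpos x)
  positivity

lemma my_radon (u v : ℝ → ℝ) (hu : Continuous u) (hv : Continuous v)
    (hup : ∀ θ, 0 < u θ) (hvp : ∀ θ, 0 < v θ) :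
    (∫ θ in (0:ℝ)..(2*π), u θ) ^ 3
      ≤ (∫ θ in (0:ℝ)..(2*π), u θ ^ 3 / v θ ^ 2) * (∫ θ in (0:ℝ)..(2*π), v θ) ^ 2 := by
  have h2π : (0:ℝ) ≤ 2*π := by positivity
  have hvs : Continuous fun θ => Real.sqrt (v θ) := Real.continuous_sqrt.comp hv
  have hus : Continuous fun θ => Real.sqrt (u θ) := Real.continuous_sqrt.comp hu
  have hvne : ∀ θ, Real.sqrt (v θ) ≠ 0 := fun θ => (Real.sqrt_pos.mpr (hvp θ)).ne'
  have hvne' : ∀ θ, v θ ≠ 0 := fun θ => (hvp θ).ne'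
  set U : ℝ := ∫ θ in (0:ℝ)..(2*π), u θ with hU
  set V : ℝ := ∫ θ in (0:ℝ)..(2*π), v θ with hV
  set Q : ℝ := ∫ θ in (0:ℝ)..(2*π), u θ ^ 2 / v θ with hQ
  set R : ℝ := ∫ θ in (0:ℝ)..(2*π), u θ ^ 3 / v θ ^ 2 with hR
  have hUpos : 0 < U := my_pos_integral u hu hup
  have hVpos : 0 < V := my_pos_integral v hv hvp
  -- first CS
  have cs1 : U ^ 2 ≤ Q * V := by
    have eg : (∫ θ in (0:ℝ)..(2*π), (Real.sqrt (v θ)) ^ 2) = V := by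
      apply intervalIntegral.integral_congr
      intro θ _
      exact Real.sq_sqrt (hvp θ).le
    have efg : (∫ θ in (0:ℝ)..(2*π), (u θ / Real.sqrt (v θ)) * Real.sqrt (v θ)) = U := by
      apply intervalIntegral.integral_congr
      intro θ _
      exact div_mul_cancel₀ _ (hvne θ)
    have ef : (∫ θ in (0:ℝ)..(2*π), (u θ / Real.sqrt (v θ)) ^ 2) = Q := by
      apply intervalIntegral.integral_congr
      intro θ _
      show (u θ / Real.sqrt (v θ)) ^ 2 = u θ ^ 2 / v θ
      rw [div_pow, Real.sq_sqrt (hvp θ).le]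
    have hgg : (0:ℝ) < ∫ θ in (0:ℝ)..(2*π), (fun θ => Real.sqrt (v θ)) θ ^ 2 := by
      show (0:ℝ) < ∫ θ in (0:ℝ)..(2*π), (Real.sqrt (v θ)) ^ 2
      rw [eg]; exact hVpos
    have base := my_cs (fun θ => u θ / Real.sqrt (v θ)) (fun θ => Real.sqrt (v θ))
      0 (2*π) h2π (hu.div hvs hvne) hvs hgg
    calc U ^ 2 = (∫ θ in (0:ℝ)..(2*π), (u θ / Real.sqrt (v θ)) * Real.sqrt (v θ)) ^ 2 := by
          rw [efg]
      _ ≤ (∫ θ in (0:ℝ)..(2*π), (u θ / Real.sqrt (v θ)) ^ 2)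
            * ∫ θ in (0:ℝ)..(2*π), (Real.sqrt (v θ)) ^ 2 := base
      _ = Q * V := by rw [ef, eg]
  -- second CS
  have cs2 : Q ^ 2 ≤ R * U := by
    have eg : (∫ θ in (0:ℝ)..(2*π), (Real.sqrt (u θ)) ^ 2) = U := by
      apply intervalIntegral.integral_congr
      intro θ _
      exact Real.sq_sqrt (hup θ).le
    have efg : (∫ θ in (0:ℝ)..(2*π), (u θ * Real.sqrt (u θ) / v θ) * Real.sqrt (u θ)) = Q := by
      apply intervalIntegral.integral_congr
      intro θ _
      show u θ * Real.sqrt (u θ) / v θ * Real.sqrt (u θ) = u θ ^ 2 / v θ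
      have e : u θ * Real.sqrt (u θ) / v θ * Real.sqrt (u θ)
          = u θ * (Real.sqrt (u θ) * Real.sqrt (u θ)) / v θ := by ring
      rw [e, Real.mul_self_sqrt (hup θ).le]
      ring
    have ef : (∫ θ in (0:ℝ)..(2*π), (u θ * Real.sqrt (u θ) / v θ) ^ 2) = R := by
      apply intervalIntegral.integral_congr
      intro θ _
      show (u θ * Real.sqrt (u θ) / v θ) ^ 2 = u θ ^ 3 / v θ ^ 2
      have e : (u θ * Real.sqrt (u θ) / v θ) ^ 2
          = u θ ^ 2 * (Real.sqrt (u θ) * Real.sqrt (u θ)) / v θ ^ 2 := by ring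
      rw [e, Real.mul_self_sqrt (hup θ).le]
      ring
    have hgg : (0:ℝ) < ∫ θ in (0:ℝ)..(2*π), (fun θ => Real.sqrt (u θ)) θ ^ 2 := by
      show (0:ℝ) < ∫ θ in (0:ℝ)..(2*π), (Real.sqrt (u θ)) ^ 2
      rw [eg]; exact hUpos
    have base := my_cs (fun θ => u θ * Real.sqrt (u θ) / v θ) (fun θ => Real.sqrt (u θ))
      0 (2*π) h2π ((hu.mul hus).div hv hvne') hus hgg
    calc Q ^ 2 = (∫ θ in (0:ℝ)..(2*π), (u θ * Real.sqrt (u θ) / v θ) * Real.sqrt (u θ)) ^ 2 := by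
          rw [efg]
      _ ≤ (∫ θ in (0:ℝ)..(2*π), (u θ * Real.sqrt (u θ) / v θ) ^ 2)
            * ∫ θ in (0:ℝ)..(2*π), (Real.sqrt (u θ)) ^ 2 := base
      _ = R * U := by rw [ef, eg]
  -- combine
  have hQpos : 0 < Q :=
    my_pos_integral _ ((hu.pow 2).div hv hvne')
      (fun θ => div_pos (pow_pos (hup θ) 2) (hvp θ))
  have m1 : U ^ 2 * U ^ 2 ≤ (Q * V) * (Q * V) :=
    mul_le_mul cs1 cs1 (sq_nonneg U) (mul_nonneg hQpos.le hVpos.le)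
  have m2 : Q ^ 2 * V ^ 2 ≤ (R * U) * V ^ 2 :=
    mul_le_mul_of_nonneg_right cs2 (sq_nonneg V)
  nlinarith [m1, m2, hUpos, hVpos]

lemma my_minkowski (hK hL : ℝ → ℝ) (bK : IsSmoothBody hK) (bL : IsSmoothBody hL)
    (sK : OriginSymmetric hK) (sL : OriginSymmetric hL) :
    (∫ θ in (0:ℝ)..(2*π), hK θ * bodyRho hL θ) ^ 2
      ≥ (∫ θ in (0:ℝ)..(2*π), hK θ * bodyRho hK θ)
        * ∫ θ in (0:ℝ)..(2*π), hL θ * bodyRho hL θ := by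
  obtain ⟨cK, pK, posK⟩ := bK
  obtain ⟨cL, pL, posL⟩ := bL
  obtain ⟨dK, dK', cK''⟩ := my_smooth hK cK
  obtain ⟨dL, dL', cL''⟩ := my_smooth hL cL
  have hKc : Continuous hK := dK.continuous
  have hLc : Continuous hL := dL.continuous
  have hKc' : Continuous (deriv hK) := dK'.continuous
  have hLc' : Continuous (deriv hL) := dL'.continuous
  have hKpos : ∀ θ, 0 < hK θ := my_body_pos hK ⟨cK, pK, posK⟩ sK
  have hLpos : ∀ θ, 0 < hL θ := my_body_pos hL ⟨cL, pL, posL⟩ sL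
  have ρKc : Continuous (bodyRho hK) := hKc.add cK''
  have ρLc : Continuous (bodyRho hL) := hLc.add cL''
  have pK2 : hK (2*π) = hK 0 := by have := pK 0; rw [zero_add] at this; exact this
  have pL2 : hL (2*π) = hL 0 := by have := pL 0; rw [zero_add] at this; exact this
  have pK2' : deriv hK (2*π) = deriv hK 0 := by
    have := my_periodic_deriv hK (2*π) pK 0; rw [zero_add] at this; exact this
  have pL2' : deriv hL (2*π) = deriv hL 0 := by
    have := my_periodic_deriv hL (2*π) pL 0; rw [zero_add] at this; exact this
  set IKK : ℝ := ∫ θ in (0:ℝ)..(2*π), hK θ * bodyRho hK θ with hIKK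
  set ILL : ℝ := ∫ θ in (0:ℝ)..(2*π), hL θ * bodyRho hL θ with hILL
  set X : ℝ := ∫ θ in (0:ℝ)..(2*π), hK θ * bodyRho hL θ with hXd
  have EKK := my_bilin hK hK dK hKc' hKc dK' cK'' pK2 pK2'
  have EKL := my_bilin hK hL dK hKc' hLc dL' cL'' pK2 pL2'
  have ELL := my_bilin hL hL dL hLc' hLc dL' cL'' pL2 pL2'
  set a : ℝ := ∫ θ in (0:ℝ)..(2*π), hK θ with ha
  set b : ℝ := ∫ θ in (0:ℝ)..(2*π), hL θ with hb
  have hapos : 0 < a := my_pos_integral hK hKc hKpos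
  have hbpos : 0 < b := my_pos_integral hL hLc hLpos
  have hIKKpos : 0 < IKK :=
    my_pos_integral _ (hKc.mul ρKc) (fun θ => mul_pos (hKpos θ) (posK θ))
  have hILLpos : 0 < ILL :=
    my_pos_integral _ (hLc.mul ρLc) (fun θ => mul_pos (hLpos θ) (posL θ))
  set w : ℝ → ℝ := fun θ => b * hK θ - a * hL θ with hw
  have wd : ∀ θ, HasDerivAt w (b * deriv hK θ - a * deriv hL θ) θ := fun θ =>
    ((dK θ).hasDerivAt.const_mul b).sub ((dL θ).hasDerivAt.const_mul a)
  have wdiff : Differentiable ℝ w := fun θ => (wd θ).differentiableAt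
  have wderiv : deriv w = fun θ => b * deriv hK θ - a * deriv hL θ :=
    funext fun θ => (wd θ).deriv
  have wc' : Continuous (deriv w) := by
    rw [wderiv]
    exact (continuous_const.mul hKc').sub (continuous_const.mul hLc')
  have wper : Function.Periodic w π := by
    intro x; simp only [hw]; rw [sK x, sL x]
  have wmean : (∫ θ in (0:ℝ)..(2*π), w θ) = 0 := by
    simp only [hw]
    rw [intervalIntegral.integral_sub
        (Continuous.intervalIntegrable (u := fun θ => b * hK θ) (continuous_const.mul hKc) _ _)
        (Continuous.intervalIntegrable (u := fun θ => a * hL θ) (continuous_const.mul hLc) _ _),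
      intervalIntegral.integral_const_mul, intervalIntegral.integral_const_mul,
      ← ha, ← hb]
    ring
  have core := my_core_neg w wdiff wc' wper wmean
  have cF1 : Continuous (fun θ => hK θ * hK θ - deriv hK θ * deriv hK θ) :=
    (hKc.mul hKc).sub (hKc'.mul hKc')
  have cF2 : Continuous (fun θ => hK θ * hL θ - deriv hK θ * deriv hL θ) :=
    (hKc.mul hLc).sub (hKc'.mul hLc')
  have cF3 : Continuous (fun θ => hL θ * hL θ - deriv hL θ * deriv hL θ) :=
    (hLc.mul hLc).sub (hLc'.mul hLc')
  have expand : (∫ θ in (0:ℝ)..(2*π), (w θ ^ 2 - deriv w θ ^ 2))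
      = b^2 * (∫ θ in (0:ℝ)..(2*π), (hK θ * hK θ - deriv hK θ * deriv hK θ))
        - 2*a*b * (∫ θ in (0:ℝ)..(2*π), (hK θ * hL θ - deriv hK θ * deriv hL θ))
        + a^2 * ∫ θ in (0:ℝ)..(2*π), (hL θ * hL θ - deriv hL θ * deriv hL θ) := by
    have pt : ∀ θ ∈ Set.uIcc (0:ℝ) (2*π), w θ ^ 2 - deriv w θ ^ 2
        = (b^2 * (hK θ * hK θ - deriv hK θ * deriv hK θ)
            - 2*a*b * (hK θ * hL θ - deriv hK θ * deriv hL θ))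
          + a^2 * (hL θ * hL θ - deriv hL θ * deriv hL θ) := by
      intro θ _
      rw [wderiv]
      simp only [hw]
      ring
    rw [intervalIntegral.integral_congr pt]
    rw [intervalIntegral.integral_add
        (Continuous.intervalIntegrable (u := fun θ =>
          b^2 * (hK θ * hK θ - deriv hK θ * deriv hK θ)
            - 2*a*b * (hK θ * hL θ - deriv hK θ * deriv hL θ)) (((continuous_const.mul cF1).sub (continuous_const.mul cF2))) _ _)
        (Continuous.intervalIntegrable (u := fun θ =>
          a^2 * (hL θ * hL θ - deriv hL θ * deriv hL θ)) (continuous_const.mul cF3) _ _),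
      intervalIntegral.integral_sub
        (Continuous.intervalIntegrable (u := fun θ =>
          b^2 * (hK θ * hK θ - deriv hK θ * deriv hK θ)) (continuous_const.mul cF1) _ _)
        (Continuous.intervalIntegrable (u := fun θ =>
          2*a*b * (hK θ * hL θ - deriv hK θ * deriv hL θ)) (continuous_const.mul cF2) _ _),
      intervalIntegral.integral_const_mul, intervalIntegral.integral_const_mul,
      intervalIntegral.integral_const_mul]
  rw [expand, ← EKK, ← EKL, ← ELL] at core
  have key : b^2 * IKK + a^2 * ILL ≤ 2*a*b*X := by linarith [core]
  have hsum : 0 < b^2 * IKK + a^2 * ILL := by positivity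
  have hXpos : 0 < X := by nlinarith [key, hsum, mul_pos hapos hbpos]
  have h4 : 4 * (b^2 * IKK) * (a^2 * ILL) ≤ (b^2 * IKK + a^2 * ILL)^2 := by
    nlinarith [sq_nonneg (b^2 * IKK - a^2 * ILL)]
  have h5 : (b^2 * IKK + a^2 * ILL)^2 ≤ (2*a*b*X)^2 :=
    pow_le_pow_left₀ hsum.le key 2
  have r1 : 4*(a^2*b^2) * (IKK * ILL) = 4 * (b^2 * IKK) * (a^2 * ILL) := by ring
  have r2 : (2*a*b*X)^2 = 4*(a^2*b^2) * X^2 := by ring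
  have h6 : 4*(a^2*b^2) * (IKK * ILL) ≤ 4*(a^2*b^2) * X^2 := by
    rw [r1]
    linarith [h4, h5, r2.symm.trans_le (le_refl _)]
  have hc : (0:ℝ) < 4*(a^2*b^2) := by positivity
  exact ge_iff_le.mpr (le_of_mul_le_mul_left h6 hc)

/-- For origin-symmetric planar convex bodies `K, L` with `C²`
boundaries of positive curvature,
`∫_{S¹} (κ_K/κ_L)² dV_{L,K} + V(K)V(L,K)/V(L) ≥ 2 V(L,K)`. -/
theorem stmt10 (hK hL : ℝ → ℝ) (bK : IsSmoothBody hK) (bL : IsSmoothBody hL)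
    (sK : OriginSymmetric hK) (sL : OriginSymmetric hL) :
    mixedConeIntegral hL hK (fun θ => (bodyCurv hK θ / bodyCurv hL θ) ^ 2) +
      bodyArea hK * bodyMixedVol hL hK / bodyArea hL ≥ 2 * bodyMixedVol hL hK := by
  obtain ⟨cK, pK, posK⟩ := bK
  obtain ⟨cL, pL, posL⟩ := bL
  obtain ⟨dK, dK', cK''⟩ := my_smooth hK cK
  obtain ⟨dL, dL', cL''⟩ := my_smooth hL cL
  have hKc : Continuous hK := dK.continuous
  have hLc : Continuous hL := dL.continuous
  have hKpos : ∀ θ, 0 < hK θ := my_body_pos hK ⟨cK, pK, posK⟩ sK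
  have hLpos : ∀ θ, 0 < hL θ := my_body_pos hL ⟨cL, pL, posL⟩ sL
  have ρKc : Continuous (bodyRho hK) := hKc.add cK''
  have ρLc : Continuous (bodyRho hL) := hLc.add cL''
  have radon := my_radon (fun θ => hK θ * bodyRho hL θ) (fun θ => hK θ * bodyRho hK θ)
    (hKc.mul ρLc) (hKc.mul ρKc)
    (fun θ => mul_pos (hKpos θ) (posL θ)) (fun θ => mul_pos (hKpos θ) (posK θ))
  beta_reduce at radon
  have mink := my_minkowski hK hL ⟨cK, pK, posK⟩ ⟨cL, pL, posL⟩ sK sL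
  set X : ℝ := ∫ θ in (0:ℝ)..(2*π), hK θ * bodyRho hL θ with hXd
  set IKK : ℝ := ∫ θ in (0:ℝ)..(2*π), hK θ * bodyRho hK θ with hIKK
  set ILL : ℝ := ∫ θ in (0:ℝ)..(2*π), hL θ * bodyRho hL θ with hILL
  set R : ℝ := ∫ θ in (0:ℝ)..(2*π),
    (hK θ * bodyRho hL θ)^3 / (hK θ * bodyRho hK θ)^2 with hRd
  have hXpos : 0 < X :=
    my_pos_integral _ (hKc.mul ρLc) (fun θ => mul_pos (hKpos θ) (posL θ))
  have hIKKpos : 0 < IKK :=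
    my_pos_integral _ (hKc.mul ρKc) (fun θ => mul_pos (hKpos θ) (posK θ))
  have hILLpos : 0 < ILL :=
    my_pos_integral _ (hLc.mul ρLc) (fun θ => mul_pos (hLpos θ) (posL θ))
  -- identify pieces of the goal
  have eA : mixedConeIntegral hL hK (fun θ => (bodyCurv hK θ / bodyCurv hL θ) ^ 2)
      = (1/2) * R := by
    simp only [mixedConeIntegral, hRd]
    congr 1
    apply intervalIntegral.integral_congr
    intro θ _
    show (bodyCurv hK θ / bodyCurv hL θ) ^ 2 * (hK θ * bodyRho hL θ)
        = (hK θ * bodyRho hL θ)^3 / (hK θ * bodyRho hK θ)^2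
    simp only [bodyCurv]
    have h1 : hK θ ≠ 0 := (hKpos θ).ne'
    have h2 : bodyRho hK θ ≠ 0 := (posK θ).ne'
    have h3 : bodyRho hL θ ≠ 0 := (posL θ).ne'
    field_simp
  have eB : bodyMixedVol hL hK = (1/2) * X := rfl
  have eVK : bodyArea hK = (1/2) * IKK := rfl
  have eVL : bodyArea hL = (1/2) * ILL := rfl
  rw [eA, eB, eVK, eVL]
  -- radon : X^3 ≤ R * IKK^2 ; mink : X^2 ≥ IKK * ILL
  have hRge : X^3 / IKK^2 ≤ R := (div_le_iff₀ (by positivity)).mpr radon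
  have key : 2 * X ≤ X^3 / IKK^2 + IKK * X / ILL := by
    rw [← sub_nonneg]
    have expand : X^3 / IKK^2 + IKK * X / ILL - 2 * X
        = (X * ILL * (X^2 - IKK * ILL) + X * IKK * (ILL - IKK)^2) / (IKK^2 * ILL) := by
      field_simp
      ring
    rw [expand]
    apply div_nonneg _ (by positivity)
    have t1 : 0 ≤ X * ILL * (X^2 - IKK * ILL) :=
      mul_nonneg (mul_nonneg hXpos.le hILLpos.le) (by linarith [mink])
    have t2 : 0 ≤ X * IKK * (ILL - IKK)^2 :=
      mul_nonneg (mul_nonneg hXpos.le hIKKpos.le) (sq_nonneg _)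
    linarith
  have emid : (1/2) * IKK * ((1/2) * X) / ((1/2) * ILL) = (1/2) * (IKK * X / ILL) := by
    field_simp
  rw [emid]
  rw [ge_iff_le]
  linarith [hRge, key]
end

section
/- Let K and L be origin-symmetric convex bodies in ℝ² with C² boundaries of positive curvature. Then ∫_{S¹} (κ_K/κ_L) dV_L ≥ (V(L)/V(K))·∫_{S¹} (κ_L/κ_K) dV_L. -/
open Real MeasureTheory intervalIntegral

namespace Stmt12Aux
open Set

structure Body (h : ℝ → ℝ) : Prop where
  smooth : ContDiff ℝ 2 h
  per : Function.Periodic h π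
  rhopos : ∀ θ, 0 < bodyRho h θ

variable {h k u v f : ℝ → ℝ}

lemma Body.diff (B : Body h) : Differentiable ℝ h := B.smooth.differentiable (by norm_num)

lemma contDiff_one_deriv (hs : ContDiff ℝ 2 h) : ContDiff ℝ 1 (deriv h) := by
  have h2 : ContDiff ℝ ((1 : WithTop ℕ∞) + 1) h := by
    have e : ((1 : WithTop ℕ∞) + 1) = 2 := by norm_num
    rw [e]; exact hs
  exact (contDiff_succ_iff_deriv.mp h2).2.2

lemma Body.diffd (B : Body h) : Differentiable ℝ (deriv h) :=
  (contDiff_one_deriv B.smooth).differentiable (by norm_num)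

lemma Body.contdd (B : Body h) : Continuous (deriv (deriv h)) :=
  (contDiff_one_iff_deriv.mp (contDiff_one_deriv B.smooth)).2

lemma Body.cont (B : Body h) : Continuous h := B.smooth.continuous
lemma Body.contd (B : Body h) : Continuous (deriv h) := (contDiff_one_deriv B.smooth).continuous

lemma Body.rhocont (B : Body h) : Continuous (bodyRho h) := B.cont.add B.contdd

lemma per_deriv {c : ℝ} (hp : Function.Periodic h c) :
    Function.Periodic (deriv h) c := by
  intro x
  have hfun : (fun y => h (y + c)) = h := funext fun y => hp y
  calc deriv h (x + c) = deriv (fun y => h (y + c)) x := (deriv_comp_add_const h c x).symm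
    _ = deriv h x := by rw [hfun]

lemma Body.rhoper (B : Body h) : Function.Periodic (bodyRho h) π := by
  intro x
  unfold bodyRho
  rw [per_deriv (per_deriv B.per) x, B.per x]

lemma Body.hasD (B : Body h) (x : ℝ) : HasDerivAt h (deriv h x) x :=
  (B.diff x).hasDerivAt

lemma Body.hasD2 (B : Body h) (x : ℝ) : HasDerivAt (deriv h) (deriv (deriv h) x) x :=
  (B.diffd x).hasDerivAt

lemma Body.pos (B : Body h) (θ : ℝ) : 0 < h θ := by
  set F : ℝ → ℝ := fun φ => Real.sin (φ - θ) * deriv h φ - Real.cos (φ - θ) * h φ with hF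
  have hder : ∀ φ ∈ uIcc θ (θ + π), HasDerivAt F (Real.sin (φ - θ) * bodyRho h φ) φ := by
    intro φ _
    have hid : HasDerivAt (fun φ : ℝ => φ - θ) 1 φ := (hasDerivAt_id φ).sub_const θ
    have hsin : HasDerivAt (fun φ => Real.sin (φ - θ)) (Real.cos (φ - θ)) φ := by
      simpa [Function.comp_def] using (Real.hasDerivAt_sin (φ - θ)).comp φ hid
    have hcos : HasDerivAt (fun φ => Real.cos (φ - θ)) (-Real.sin (φ - θ)) φ := by
      simpa [Function.comp_def] using (Real.hasDerivAt_cos (φ - θ)).comp φ hid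
    have hd := (hsin.mul (B.hasD2 φ)).sub (hcos.mul (B.hasD φ))
    refine hd.congr_deriv ?_
    unfold bodyRho; ring
  have hint : IntervalIntegrable (fun φ => Real.sin (φ - θ) * bodyRho h φ) volume θ (θ + π) :=
    ((Real.continuous_sin.comp (continuous_id.sub continuous_const)).mul B.rhocont).intervalIntegrable _ _
  have key : ∫ φ in θ..(θ + π), Real.sin (φ - θ) * bodyRho h φ = F (θ + π) - F θ :=
    integral_eq_sub_of_hasDerivAt hder hint
  have hpos : 0 < ∫ φ in θ..(θ + π), Real.sin (φ - θ) * bodyRho h φ := by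
    apply intervalIntegral_pos_of_pos_on hint
    · intro x hx
      refine mul_pos (Real.sin_pos_of_pos_of_lt_pi ?_ ?_) (B.rhopos x)
      · linarith [hx.1]
      · linarith [hx.2]
    · linarith [Real.pi_pos]
  have e1 : F (θ + π) = h θ := by
    simp only [hF]
    rw [show θ + π - θ = π by ring, Real.sin_pi, Real.cos_pi, B.per θ]; ring
  have e2 : F θ = -h θ := by
    simp only [hF]
    rw [sub_self, Real.sin_zero, Real.cos_zero]; ring
  rw [key, e1, e2] at hpos
  linarith

variable {f : ℝ → ℝ}

lemma wirt_core (hf1 : Differentiable ℝ f) (hfc : Continuous (deriv f))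
    {a : ℝ} (h0 : f a = 0) (h1 : f (a + π) = 0) {c : ℝ} (hc0 : 0 < c) (hc1 : c < 1) :
    c ^ 2 * ∫ θ in a..(a + π), (f θ)^2 ≤ ∫ θ in a..(a + π), (deriv f θ)^2 := by
  have pipos := Real.pi_pos
  have hab : a ≤ a + π := by linarith
  set g : ℝ → ℝ := fun θ => c * (θ - a) + (1 - c) * π / 2 with hg
  set W : ℝ → ℝ := fun θ => c * (Real.cos (g θ) / Real.sin (g θ)) with hW
  have hgc : Continuous g := by fun_prop
  have hsin : ∀ θ ∈ uIcc a (a + π), 0 < Real.sin (g θ) := by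
    intro θ hθ
    rw [uIcc_of_le hab] at hθ
    obtain ⟨l, r⟩ := hθ
    apply Real.sin_pos_of_pos_of_lt_pi
    · simp only [hg]; nlinarith
    · simp only [hg]; nlinarith
  have hWder : ∀ θ ∈ uIcc a (a + π), HasDerivAt W (-(c^2) / (Real.sin (g θ))^2) θ := by
    intro θ hθ
    have hgder : HasDerivAt g c θ := by
      exact ((((hasDerivAt_id θ).sub_const a).const_mul c).add_const ((1 - c) * π / 2)).congr_deriv (by ring)
    have hs : HasDerivAt (fun θ => Real.sin (g θ)) (Real.cos (g θ) * c) θ :=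
      (Real.hasDerivAt_sin (g θ)).comp θ hgder
    have hcs : HasDerivAt (fun θ => Real.cos (g θ)) (-Real.sin (g θ) * c) θ := by
      simpa [Function.comp_def] using (Real.hasDerivAt_cos (g θ)).comp θ hgder
    have hne : Real.sin (g θ) ≠ 0 := ne_of_gt (hsin θ hθ)
    have hd := (hcs.div hs hne).const_mul c
    refine hd.congr_deriv ?_
    symm
    have h2 : Real.sin (g θ) ^ 2 + Real.cos (g θ) ^ 2 = 1 := Real.sin_sq_add_cos_sq (g θ)
    field_simp
    linear_combination h2
  have hWcont : ContinuousOn W (uIcc a (a + π)) := by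
    apply continuousOn_const.mul
    apply ContinuousOn.div
    · exact (Real.continuous_cos.comp hgc).continuousOn
    · exact (Real.continuous_sin.comp hgc).continuousOn
    · exact fun θ hθ => ne_of_gt (hsin θ hθ)
  set D : ℝ → ℝ := fun θ => -(c^2) / (Real.sin (g θ))^2 * (f θ)^2 + W θ * (2 * f θ * deriv f θ)
    with hD
  have hPder : ∀ θ ∈ uIcc a (a + π), HasDerivAt (fun θ => W θ * (f θ)^2) (D θ) θ := by
    intro θ hθ
    have hf2 : HasDerivAt (fun θ => (f θ)^2) (2 * f θ * deriv f θ) θ := by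
      exact ((hf1 θ).hasDerivAt.pow 2).congr_deriv (by norm_num)
    exact (hWder θ hθ).mul hf2
  have hDcont : ContinuousOn D (uIcc a (a + π)) := by
    apply ContinuousOn.add
    · apply ContinuousOn.mul
      · apply ContinuousOn.div continuousOn_const
        · exact ((Real.continuous_sin.comp hgc).pow 2).continuousOn
        · exact fun θ hθ => pow_ne_zero _ (ne_of_gt (hsin θ hθ))
      · exact (hf1.continuous.pow 2).continuousOn
    · exact hWcont.mul (((continuous_const.mul hf1.continuous).mul hfc)).continuousOn
  have hDint : IntervalIntegrable D volume a (a + π) := hDcont.intervalIntegrable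
  have hftc : ∫ θ in a..(a + π), D θ = 0 := by
    rw [integral_eq_sub_of_hasDerivAt hPder hDint]
    simp [h0, h1]
  have hpt : ∀ θ ∈ uIcc a (a + π),
      (deriv f θ)^2 - c^2 * (f θ)^2 = (deriv f θ - W θ * f θ)^2 + D θ := by
    intro θ hθ
    have hne : Real.sin (g θ) ≠ 0 := ne_of_gt (hsin θ hθ)
    have h2 : Real.sin (g θ) ^ 2 + Real.cos (g θ) ^ 2 = 1 := Real.sin_sq_add_cos_sq (g θ)
    simp only [hD, hW]
    field_simp
    linear_combination (-(c^2) * (f θ)^2) * h2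
  have hsq_cont : ContinuousOn (fun θ => (deriv f θ - W θ * f θ)^2) (uIcc a (a + π)) :=
    ((hfc.continuousOn.sub (hWcont.mul hf1.continuous.continuousOn)).pow 2)
  have e : ∫ θ in a..(a + π), ((deriv f θ)^2 - c^2 * (f θ)^2)
      = ∫ θ in a..(a + π), ((deriv f θ - W θ * f θ)^2 + D θ) :=
    integral_congr hpt
  have esplit : ∫ θ in a..(a + π), ((deriv f θ - W θ * f θ)^2 + D θ)
      = (∫ θ in a..(a + π), (deriv f θ - W θ * f θ)^2) + ∫ θ in a..(a + π), D θ :=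
    integral_add hsq_cont.intervalIntegrable hDint
  have hnn : 0 ≤ ∫ θ in a..(a + π), (deriv f θ - W θ * f θ)^2 :=
    integral_nonneg hab (fun u _ => sq_nonneg _)
  have lsplit : ∫ θ in a..(a + π), ((deriv f θ)^2 - c^2 * (f θ)^2)
      = (∫ θ in a..(a + π), (deriv f θ)^2) - c^2 * ∫ θ in a..(a + π), (f θ)^2 := by
    rw [integral_sub (f := fun θ => (deriv f θ)^2) (g := fun θ => c^2 * (f θ)^2) ((hfc.pow 2).intervalIntegrable _ _)
      ((continuous_const.mul (hf1.continuous.pow 2)).intervalIntegrable _ _),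
      intervalIntegral.integral_const_mul]
  linarith [e, esplit, hnn, lsplit, hftc]

lemma wirt (hf1 : Differentiable ℝ f) (hfc : Continuous (deriv f))
    {a : ℝ} (h0 : f a = 0) (h1 : f (a + π) = 0) :
    ∫ θ in a..(a + π), (f θ)^2 ≤ ∫ θ in a..(a + π), (deriv f θ)^2 := by
  have hab : a ≤ a + π := by linarith [Real.pi_pos]
  by_contra hcon
  push_neg at hcon
  set X := ∫ θ in a..(a + π), (f θ)^2 with hX
  set Y := ∫ θ in a..(a + π), (deriv f θ)^2 with hY
  have hYnn : 0 ≤ Y := integral_nonneg hab (fun u _ => sq_nonneg _)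
  have hXpos : 0 < X := lt_of_le_of_lt hYnn hcon
  set r := Y / X with hr
  have hr0 : 0 ≤ r := div_nonneg hYnn hXpos.le
  have hr1 : r < 1 := (div_lt_one hXpos).mpr hcon
  set c := Real.sqrt ((r + 1) / 2) with hc
  have hc2 : c ^ 2 = (r + 1) / 2 := Real.sq_sqrt (by linarith)
  have hc0 : 0 < c := Real.sqrt_pos.mpr (by linarith)
  have hc1 : c < 1 := by
    nlinarith [hc0, hc2]
  have hw := wirt_core hf1 hfc h0 h1 hc0 hc1
  rw [hc2] at hw
  have hYr : Y = r * X := by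
    rw [hr]; field_simp
  nlinarith


noncomputable def Qf (u v : ℝ → ℝ) : ℝ :=
  ∫ θ in (0:ℝ)..(2*π), (u θ * v θ - deriv u θ * deriv v θ)

lemma Body.per2 (B : Body h) : Function.Periodic h (2*π) := by
  intro x
  rw [show x + 2*π = (x + π) + π by ring, B.per, B.per]

lemma ibp (Bu : Body u) (Bv : Body v) :
    ∫ θ in (0:ℝ)..(2*π), u θ * bodyRho v θ = Qf u v := by
  have per2u : Function.Periodic u (2*π) := Bu.per2
  have per2v' : Function.Periodic (deriv v) (2*π) := per_deriv Bv.per2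
  have key : ∫ θ in (0:ℝ)..(2*π), (deriv u θ * deriv v θ + u θ * deriv (deriv v) θ)
      = u (2*π) * deriv v (2*π) - u 0 * deriv v 0 :=
    integral_deriv_mul_eq_sub_of_hasDerivAt (Bu.cont.continuousOn) (Bv.contd.continuousOn)
      (fun x _ => Bu.hasD x) (fun x _ => Bv.hasD2 x)
      (Bu.contd.intervalIntegrable _ _) (Bv.contdd.intervalIntegrable _ _)
  have hb : u (2*π) * deriv v (2*π) - u 0 * deriv v 0 = 0 := by
    have e1 : u (2*π) = u 0 := by simpa using per2u 0
    have e2 : deriv v (2*π) = deriv v 0 := by simpa using per2v' 0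
    rw [e1, e2]; ring
  have int1 : IntervalIntegrable (fun θ => u θ * v θ - deriv u θ * deriv v θ) volume 0 (2*π) :=
    ((Bu.cont.mul Bv.cont).sub (Bu.contd.mul Bv.contd)).intervalIntegrable _ _
  have int2 : IntervalIntegrable (fun θ => deriv u θ * deriv v θ + u θ * deriv (deriv v) θ)
      volume 0 (2*π) :=
    ((Bu.contd.mul Bv.contd).add (Bu.cont.mul Bv.contdd)).intervalIntegrable _ _
  have hsplit : ∫ θ in (0:ℝ)..(2*π), u θ * bodyRho v θ
      = (∫ θ in (0:ℝ)..(2*π), (u θ * v θ - deriv u θ * deriv v θ))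
        + ∫ θ in (0:ℝ)..(2*π), (deriv u θ * deriv v θ + u θ * deriv (deriv v) θ) := by
    rw [← integral_add int1 int2]
    apply integral_congr
    intro θ _
    unfold bodyRho; ring
  rw [hsplit, key, hb, add_zero]; rfl

lemma Qsym (u v : ℝ → ℝ) : Qf u v = Qf v u := by
  unfold Qf
  apply integral_congr
  intro θ _
  ring

lemma isplit3 {A B C : ℝ → ℝ} (cA : Continuous A) (cB : Continuous B) (cC : Continuous C)
    (c1 c2 c3 : ℝ) :
    ∫ θ in (0:ℝ)..(2*π), (c1 * A θ + c2 * B θ + c3 * C θ)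
      = c1 * (∫ θ in (0:ℝ)..(2*π), A θ) + c2 * (∫ θ in (0:ℝ)..(2*π), B θ)
        + c3 * ∫ θ in (0:ℝ)..(2*π), C θ := by
  rw [integral_add (f := fun θ => c1 * A θ + c2 * B θ) (g := fun θ => c3 * C θ) (((continuous_const.mul cA).add (continuous_const.mul cB)).intervalIntegrable _ _)
      ((continuous_const.mul cC).intervalIntegrable _ _),
    integral_add (f := fun θ => c1 * A θ) (g := fun θ => c2 * B θ) ((continuous_const.mul cA).intervalIntegrable _ _)
      ((continuous_const.mul cB).intervalIntegrable _ _),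
    intervalIntegral.integral_const_mul, intervalIntegral.integral_const_mul, intervalIntegral.integral_const_mul]

lemma double_int {G : ℝ → ℝ} (hG : Function.Periodic G π) (hc : Continuous G) (a : ℝ) :
    ∫ θ in (0:ℝ)..(2*π), G θ = 2 * ∫ θ in a..(a+π), G θ := by
  have i1 : ∀ x y : ℝ, IntervalIntegrable G volume x y := fun x y => hc.intervalIntegrable x y
  have h1 : ∫ θ in (0:ℝ)..(2*π), G θ = (∫ θ in (0:ℝ)..π, G θ) + ∫ θ in π..(2*π), G θ :=
    (integral_add_adjacent_intervals (i1 0 π) (i1 π (2*π))).symm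
  have h2 : ∫ θ in π..(2*π), G θ = ∫ θ in (0:ℝ)..π, G θ := by
    rw [show (2:ℝ)*π = π + π by ring]
    simpa using hG.intervalIntegral_add_eq π 0
  have h3 : ∫ θ in (0:ℝ)..π, G θ = ∫ θ in a..(a+π), G θ := by
    simpa using hG.intervalIntegral_add_eq 0 a
  rw [h1, h2, h3]; ring


lemma bonn (Bh : Body h) (Bk : Body k) (p : ℝ) :
    Qf k k * (h p)^2 - 2 * Qf h k * (k p * h p) + Qf h h * (k p)^2 ≤ 0 := by
  have hpos := Bh.pos p
  set t := k p / h p with ht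
  set f : ℝ → ℝ := fun θ => k θ - t * h θ with hf
  have hdf : ∀ θ, deriv f θ = deriv k θ - t * deriv h θ := by
    intro θ
    simp only [hf]
    rw [deriv_fun_sub (f := k) (g := fun y => t * h y) (Bk.diff θ) ((Bh.diff θ).const_mul t), deriv_const_mul t (Bh.diff θ)]
  have hfdiff : Differentiable ℝ f := Bk.diff.sub (Bh.diff.const_mul t)
  have hfc : Continuous (deriv f) := by
    have e : deriv f = fun θ => deriv k θ - t * deriv h θ := funext hdf
    rw [e]; exact Bk.contd.sub (continuous_const.mul Bh.contd)
  have hth : t * h p = k p := by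
    rw [ht]; field_simp
  have hf0 : f p = 0 := by simp only [hf]; rw [hth]; ring
  have hf1 : f (p + π) = 0 := by
    simp only [hf]
    rw [Bh.per p, Bk.per p, hth]; ring
  have hw := wirt hfdiff hfc hf0 hf1
  have pf : Function.Periodic (fun θ => (f θ)^2) π := by
    intro x
    simp only [hf]
    rw [Bh.per x, Bk.per x]
  have pf' : Function.Periodic (fun θ => (deriv f θ)^2) π := by
    intro x
    show (deriv f (x + π))^2 = (deriv f x)^2
    rw [hdf, hdf, per_deriv Bh.per x, per_deriv Bk.per x]
  have cf2 : Continuous (fun θ => (f θ)^2) := hfdiff.continuous.pow 2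
  have cf2' : Continuous (fun θ => (deriv f θ)^2) := hfc.pow 2
  have d1 : ∫ θ in (0:ℝ)..(2*π), (f θ)^2 = 2 * ∫ θ in p..(p+π), (f θ)^2 :=
    double_int pf cf2 p
  have d2 : ∫ θ in (0:ℝ)..(2*π), (deriv f θ)^2 = 2 * ∫ θ in p..(p+π), (deriv f θ)^2 :=
    double_int pf' cf2' p
  have big : ∫ θ in (0:ℝ)..(2*π), ((f θ)^2 - (deriv f θ)^2) ≤ 0 := by
    rw [integral_sub (cf2.intervalIntegrable _ _) (cf2'.intervalIntegrable _ _), d1, d2]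
    linarith
  have expand : ∫ θ in (0:ℝ)..(2*π), ((f θ)^2 - (deriv f θ)^2)
      = 1 * Qf k k + (-(2*t)) * Qf h k + t^2 * Qf h h := by
    unfold Qf
    rw [← isplit3 (A := fun θ => k θ * k θ - deriv k θ * deriv k θ) (B := fun θ => h θ * k θ - deriv h θ * deriv k θ) (C := fun θ => h θ * h θ - deriv h θ * deriv h θ) ((Bk.cont.mul Bk.cont).sub (Bk.contd.mul Bk.contd))
      ((Bh.cont.mul Bk.cont).sub (Bh.contd.mul Bk.contd))
      ((Bh.cont.mul Bh.cont).sub (Bh.contd.mul Bh.contd)) 1 (-(2*t)) (t^2)]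
    apply integral_congr
    intro θ _
    show (f θ)^2 - (deriv f θ)^2 = _
    rw [hdf]
    simp only [hf]
    ring
  have key : Qf k k - 2*t*Qf h k + t^2 * Qf h h ≤ 0 := by
    rw [expand] at big; linarith
  have goal2 : (Qf k k - 2*t*Qf h k + t^2 * Qf h h) * (h p)^2 ≤ 0 :=
    mul_nonpos_iff.mpr (Or.inr ⟨key, sq_nonneg _⟩)
  calc Qf k k * (h p)^2 - 2 * Qf h k * (k p * h p) + Qf h h * (k p)^2
      = (Qf k k - 2*t*Qf h k + t^2 * Qf h h) * (h p)^2 := by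
        rw [← hth]; ring
    _ ≤ 0 := goal2


lemma main_ineq (Bh : Body h) (Bk : Body k) :
    (∫ θ in (0:ℝ)..(2*π), h θ * bodyRho h θ) * (∫ θ in (0:ℝ)..(2*π), h θ * bodyRho k θ)
      ≤ (∫ θ in (0:ℝ)..(2*π), h θ * (bodyRho h θ)^2 / bodyRho k θ)
        * (∫ θ in (0:ℝ)..(2*π), k θ * bodyRho k θ) := by
  have pipos := Real.pi_pos
  have h2pi : (0:ℝ) ≤ 2*π := by linarith
  -- continuous integrands
  have cA : Continuous (fun θ => h θ * (bodyRho h θ)^2 / bodyRho k θ) :=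
    (Bh.cont.mul (Bh.rhocont.pow 2)).div Bk.rhocont (fun θ => ne_of_gt (Bk.rhopos θ))
  have cB : Continuous (fun θ => (k θ)^2 * bodyRho k θ / h θ) :=
    ((Bk.cont.pow 2).mul Bk.rhocont).div Bh.cont (fun θ => ne_of_gt (Bh.pos θ))
  have cC : Continuous (fun θ => k θ * bodyRho h θ) := Bk.cont.mul Bh.rhocont
  have cI2 : Continuous (fun θ => k θ * bodyRho k θ) := Bk.cont.mul Bk.rhocont
  have cI3 : Continuous (fun θ => h θ * bodyRho h θ) := Bh.cont.mul Bh.rhocont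
  have cI4 : Continuous (fun θ => h θ * bodyRho k θ) := Bh.cont.mul Bk.rhocont
  set I1 := ∫ θ in (0:ℝ)..(2*π), h θ * (bodyRho h θ)^2 / bodyRho k θ with hI1
  set I2 := ∫ θ in (0:ℝ)..(2*π), k θ * bodyRho k θ with hI2
  set I3 := ∫ θ in (0:ℝ)..(2*π), h θ * bodyRho h θ with hI3
  set I4 := ∫ θ in (0:ℝ)..(2*π), h θ * bodyRho k θ with hI4
  set S := ∫ θ in (0:ℝ)..(2*π), (k θ)^2 * bodyRho k θ / h θ with hS
  -- identities with the quadratic form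
  have iQ2 : I2 = Qf k k := ibp Bk Bk
  have iQ3 : I3 = Qf h h := ibp Bh Bh
  have iQ4 : I4 = Qf h k := ibp Bh Bk
  have iC : ∫ θ in (0:ℝ)..(2*π), k θ * bodyRho h θ = Qf h k := (ibp Bk Bh).trans (Qsym k h)
  -- positivity
  have I1pos : 0 < I1 := by
    apply intervalIntegral_pos_of_pos_on (cA.intervalIntegrable _ _)
    · intro x _
      exact div_pos (mul_pos (Bh.pos x) (pow_pos (Bh.rhopos x) 2)) (Bk.rhopos x)
    · linarith
  have I2pos : 0 < I2 := by
    apply intervalIntegral_pos_of_pos_on (cI2.intervalIntegrable _ _)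
    · intro x _
      exact mul_pos (Bk.pos x) (Bk.rhopos x)
    · linarith
  have I3pos : 0 < I3 := by
    apply intervalIntegral_pos_of_pos_on (cI3.intervalIntegrable _ _)
    · intro x _
      exact mul_pos (Bh.pos x) (Bh.rhopos x)
    · linarith
  have I4pos : 0 < I4 := by
    apply intervalIntegral_pos_of_pos_on (cI4.intervalIntegrable _ _)
    · intro x _
      exact mul_pos (Bh.pos x) (Bk.rhopos x)
    · linarith
  have Spos : 0 < S := by
    apply intervalIntegral_pos_of_pos_on (cB.intervalIntegrable _ _)
    · intro x _
      exact div_pos (mul_pos (pow_pos (Bk.pos x) 2) (Bk.rhopos x)) (Bh.pos x)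
    · linarith
  -- Cauchy-Schwarz: (Qf h k)^2 ≤ I1 * S
  have hCS : (Qf h k)^2 ≤ I1 * S := by
    have int_pt : ∀ t : ℝ, 0 ≤ I1 * (t * t) + (-(2 * Qf h k)) * t + S := by
      intro t
      have pt : ∀ u : ℝ, 0 ≤ t^2 * (h u * (bodyRho h u)^2 / bodyRho k u)
          + (-(2*t)) * (k u * bodyRho h u) + 1 * ((k u)^2 * bodyRho k u / h u) := by
        intro u
        have hAB : (h u * (bodyRho h u)^2 / bodyRho k u) * ((k u)^2 * bodyRho k u / h u)
            = (k u * bodyRho h u)^2 := by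
          have h1 : h u ≠ 0 := ne_of_gt (Bh.pos u)
          have h2 : bodyRho k u ≠ 0 := ne_of_gt (Bk.rhopos u)
          field_simp
        have hApos : 0 < h u * (bodyRho h u)^2 / bodyRho k u :=
          div_pos (mul_pos (Bh.pos u) (pow_pos (Bh.rhopos u) 2)) (Bk.rhopos u)
        nlinarith [sq_nonneg (t * (h u * (bodyRho h u)^2 / bodyRho k u) - k u * bodyRho h u),
          hAB, hApos]
      have key : 0 ≤ ∫ u in (0:ℝ)..(2*π), (t^2 * (h u * (bodyRho h u)^2 / bodyRho k u)
          + (-(2*t)) * (k u * bodyRho h u) + 1 * ((k u)^2 * bodyRho k u / h u)) :=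
        integral_nonneg h2pi (fun u _ => pt u)
      rw [isplit3 cA cC cB (t^2) (-(2*t)) 1] at key
      rw [iC] at key
      nlinarith [key]
    have hd := discrim_le_zero int_pt
    rw [discrim] at hd
    nlinarith [hd]
  -- integrated Bonnesen: I3 * S ≤ I2 * I4
  have hB : I3 * S ≤ I2 * I4 := by
    have ptB : ∀ u : ℝ, Qf k k * (h u * bodyRho k u) + (-(2 * Qf h k)) * (k u * bodyRho k u)
        + Qf h h * ((k u)^2 * bodyRho k u / h u) ≤ 0 := by
      intro u
      have hb := bonn Bh Bk u
      have hhp := Bh.pos u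
      have hkr := Bk.rhopos u
      have e : Qf k k * (h u * bodyRho k u) + (-(2 * Qf h k)) * (k u * bodyRho k u)
          + Qf h h * ((k u)^2 * bodyRho k u / h u)
          = (Qf k k * (h u)^2 - 2 * Qf h k * (k u * h u) + Qf h h * (k u)^2)
            * (bodyRho k u / h u) := by
        have h1 : h u ≠ 0 := ne_of_gt hhp
        field_simp
        ring
      rw [e]
      exact mul_nonpos_iff.mpr (Or.inr ⟨hb, le_of_lt (div_pos hkr hhp)⟩)
    have h0 : 0 ≤ ∫ u in (0:ℝ)..(2*π), -(Qf k k * (h u * bodyRho k u)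
        + (-(2 * Qf h k)) * (k u * bodyRho k u) + Qf h h * ((k u)^2 * bodyRho k u / h u)) :=
      integral_nonneg h2pi (fun u _ => by linarith [ptB u])
    rw [intervalIntegral.integral_neg] at h0
    have h1 : ∫ u in (0:ℝ)..(2*π), (Qf k k * (h u * bodyRho k u)
        + (-(2 * Qf h k)) * (k u * bodyRho k u) + Qf h h * ((k u)^2 * bodyRho k u / h u)) ≤ 0 :=
      by linarith
    rw [isplit3 cI4 cI2 cB (Qf k k) (-(2 * Qf h k)) (Qf h h)] at h1
    rw [← iQ2, ← iQ3, ← iQ4] at h1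
    nlinarith [h1]
  -- combine
  rw [iQ4] at *
  nlinarith [hCS, hB, I1pos, I2pos, I4pos, Spos, I3pos,
    mul_le_mul_of_nonneg_left hCS I3pos.le, mul_le_mul_of_nonneg_left hB I1pos.le]

end Stmt12Aux

/-- For origin-symmetric planar convex bodies `K, L` with `C²`
boundaries of positive curvature,
`∫_{S¹} (κ_K/κ_L) dV_L ≥ (V(L)/V(K)) ∫_{S¹} (κ_L/κ_K) dV_L`. -/
theorem stmt12 (hK hL : ℝ → ℝ) (bK : IsSmoothBody hK) (bL : IsSmoothBody hL)
    (sK : OriginSymmetric hK) (sL : OriginSymmetric hL) :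
    coneIntegral hL (fun θ => bodyCurv hK θ / bodyCurv hL θ) ≥
      (bodyArea hL / bodyArea hK) *
        coneIntegral hL (fun θ => bodyCurv hL θ / bodyCurv hK θ) := by
  have BK : Stmt12Aux.Body hK := ⟨bK.1, sK, bK.2.2⟩
  have BL : Stmt12Aux.Body hL := ⟨bL.1, sL, bL.2.2⟩
  have pipos := Real.pi_pos
  have e1 : coneIntegral hL (fun θ => bodyCurv hK θ / bodyCurv hL θ)
      = (1/2) * ∫ θ in (0:ℝ)..(2*π), hL θ * (bodyRho hL θ)^2 / bodyRho hK θ := by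
    unfold coneIntegral
    congr 1
    apply intervalIntegral.integral_congr
    intro θ _
    show bodyCurv hK θ / bodyCurv hL θ * (hL θ * bodyRho hL θ) = _
    unfold bodyCurv
    have h1 : bodyRho hK θ ≠ 0 := ne_of_gt (bK.2.2 θ)
    have h2 : bodyRho hL θ ≠ 0 := ne_of_gt (bL.2.2 θ)
    field_simp
  have e2 : coneIntegral hL (fun θ => bodyCurv hL θ / bodyCurv hK θ)
      = (1/2) * ∫ θ in (0:ℝ)..(2*π), hL θ * bodyRho hK θ := by
    unfold coneIntegral
    congr 1
    apply intervalIntegral.integral_congr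
    intro θ _
    show bodyCurv hL θ / bodyCurv hK θ * (hL θ * bodyRho hL θ) = _
    unfold bodyCurv
    have h1 : bodyRho hK θ ≠ 0 := ne_of_gt (bK.2.2 θ)
    have h2 : bodyRho hL θ ≠ 0 := ne_of_gt (bL.2.2 θ)
    field_simp
  have e3 : bodyArea hL = (1/2) * ∫ θ in (0:ℝ)..(2*π), hL θ * bodyRho hL θ := rfl
  have e4 : bodyArea hK = (1/2) * ∫ θ in (0:ℝ)..(2*π), hK θ * bodyRho hK θ := rfl
  have main := Stmt12Aux.main_ineq BL BK
  have I2pos : 0 < ∫ θ in (0:ℝ)..(2*π), hK θ * bodyRho hK θ := by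
    apply intervalIntegral.intervalIntegral_pos_of_pos_on
      ((BK.cont.mul BK.rhocont).intervalIntegrable _ _)
    · intro x _
      exact mul_pos (BK.pos x) (BK.rhopos x)
    · linarith
  rw [ge_iff_le, e1, e2, e3, e4]
  have e5 : (1/2 * ∫ θ in (0:ℝ)..(2*π), hL θ * bodyRho hL θ)
      / (1/2 * ∫ θ in (0:ℝ)..(2*π), hK θ * bodyRho hK θ)
      = (∫ θ in (0:ℝ)..(2*π), hL θ * bodyRho hL θ)
        / (∫ θ in (0:ℝ)..(2*π), hK θ * bodyRho hK θ) :=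
    mul_div_mul_left _ _ (by norm_num)
  rw [e5, div_mul_eq_mul_div, div_le_iff₀ I2pos]
  nlinarith [main]
end
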